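/- arXiv:2409.07103 — 7 statements merged into one kernel-verified Lean document; each statement's English description precedes it below -/
import Mathlib

section
/- Let (A_i)_{i∈I} be a countable family of subsets of ℕ, each with positive lower density, and let (N_i)_{i∈I} be a family of positive integers indexed by the same countable set I. Then there exists a family (B_i)_{i∈I} of pairwise disjoint subsets of ℕ, each with positive lower density, such that (a) B_i ⊆ A_i and min(B_i) ≥ N_i for all i ∈ I, and (b) for any i, j ∈ I and any n ∈ B_i, m ∈ B_j with n ≠ m, one has |n − m| ≥ N_i + N_j. -/
open Filter Topology Set
open scoped Classical

noncomputable def lowerDensity (A : Set ℕ) : ℝ :=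
  Filter.atTop.liminf fun N : ℕ => (((Finset.Icc 1 N).filter (· ∈ A)).card : ℝ) / N

namespace SepAux

/-- count of A in [1,n] -/
noncomputable def cnt (A : Set ℕ) (n : ℕ) : ℕ := ((Finset.Icc 1 n).filter (· ∈ A)).card

lemma lowerDensity_eq (A : Set ℕ) :
    lowerDensity A = Filter.atTop.liminf fun n : ℕ => (cnt A n : ℝ) / n := rfl

lemma cnt_le (A : Set ℕ) (n : ℕ) : cnt A n ≤ n := by
  classical
  calc cnt A n ≤ (Finset.Icc 1 n).card := Finset.card_filter_le _ _
  _ = n := by simp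

/-- greedy c-separated subset of A, also restricted to [c,∞) -/
def greedy (A : Set ℕ) (c : ℕ) : ℕ → Prop
  | n => n ∈ A ∧ c ≤ n ∧ ∀ m, m < n → greedy A c m → m + c ≤ n
termination_by n => n

lemma greedy_iff (A : Set ℕ) (c n : ℕ) :
    greedy A c n ↔ n ∈ A ∧ c ≤ n ∧ ∀ m, m < n → greedy A c m → m + c ≤ n := by
  rw [greedy]

lemma greedy_mem {A : Set ℕ} {c n : ℕ} (h : greedy A c n) : n ∈ A :=
  ((greedy_iff A c n).1 h).1

lemma greedy_le {A : Set ℕ} {c n : ℕ} (h : greedy A c n) : c ≤ n :=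
  ((greedy_iff A c n).1 h).2.1

lemma greedy_sep {A : Set ℕ} {c m n : ℕ} (hm : greedy A c m) (hn : greedy A c n)
    (h : m < n) : m + c ≤ n :=
  ((greedy_iff A c n).1 hn).2.2 m h hm

lemma greedy_cover {A : Set ℕ} {c n : ℕ} (hc : 0 < c) (hA : n ∈ A) (hn : c ≤ n) :
    ∃ m, greedy A c m ∧ m ≤ n ∧ n < m + c := by
  by_cases h : greedy A c n
  · exact ⟨n, h, le_refl n, by omega⟩
  · rw [greedy_iff] at h
    push_neg at h
    obtain ⟨m, hm1, hm2, hm3⟩ := h hA hn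
    exact ⟨m, hm2, by omega, by omega⟩

lemma cnt_greedy_le (A : Set ℕ) {c : ℕ} (hc : 0 < c) (n : ℕ) :
    cnt {x | greedy A c x} n ≤ n / c := by
  classical
  have : cnt {x | greedy A c x} n ≤ (Finset.Icc 1 (n / c)).card := by
    apply Finset.card_le_card_of_injOn (fun s => s / c)
    · intro a ha
      simp only [Finset.mem_coe, Finset.mem_filter, Finset.mem_Icc, Set.mem_setOf_eq] at ha ⊢
      obtain ⟨⟨_, han⟩, hag⟩ := ha
      have hca := greedy_le hag
      constructor
      · exact (Nat.one_le_div_iff hc).2 hca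
      · exact Nat.div_le_div_right han
    · intro a ha b hb hab
      have hab' : a / c = b / c := hab
      simp only [Finset.coe_filter, Finset.mem_Icc, Set.mem_setOf_eq] at ha hb
      rcases Nat.lt_trichotomy a b with h | h | h
      · exfalso
        have h1 := greedy_sep ha.2 hb.2 h
        have h2 : (a + c) / c ≤ b / c := Nat.div_le_div_right h1
        rw [Nat.add_div_right a hc] at h2
        omega
      · exact h
      · exfalso
        have h1 := greedy_sep hb.2 ha.2 h
        have h2 : (b + c) / c ≤ a / c := Nat.div_le_div_right h1
        rw [Nat.add_div_right b hc] at h2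
        omega
  simpa using this

lemma cnt_le_greedy (A : Set ℕ) {c : ℕ} (hc : 0 < c) (n : ℕ) :
    cnt A n ≤ c * cnt {x | greedy A c x} n + c := by
  classical
  set G : Finset ℕ := (Finset.Icc 1 n).filter (· ∈ {x | greedy A c x}) with hG
  set s₁ : Finset ℕ := (Finset.Icc 1 n).filter (fun a => a ∈ A ∧ c ≤ a) with hs₁
  set s₂ : Finset ℕ := (Finset.Icc 1 n).filter (fun a => a ∈ A ∧ a < c) with hs₂
  have hsplit : cnt A n ≤ s₁.card + s₂.card := by
    have hsub : (Finset.Icc 1 n).filter (· ∈ A) ⊆ s₁ ∪ s₂ := by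
      intro a ha
      simp only [Finset.mem_filter, Finset.mem_union, hs₁, hs₂] at ha ⊢
      by_cases hca : c ≤ a
      · exact Or.inl ⟨ha.1, ha.2, hca⟩
      · exact Or.inr ⟨ha.1, ha.2, by omega⟩
    have h0 : cnt A n = ((Finset.Icc 1 n).filter (· ∈ A)).card := rfl
    rw [h0]
    calc ((Finset.Icc 1 n).filter (· ∈ A)).card ≤ (s₁ ∪ s₂).card := Finset.card_le_card hsub
      _ ≤ s₁.card + s₂.card := Finset.card_union_le _ _
  have h2 : s₂.card ≤ c := by
    have : s₂ ⊆ Finset.Ico 1 c := by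
      intro a ha
      simp only [Finset.mem_filter, Finset.mem_Icc, hs₂] at ha
      simp only [Finset.mem_Ico]
      omega
    calc s₂.card ≤ (Finset.Ico 1 c).card := Finset.card_le_card this
      _ = c - 1 := by simp
      _ ≤ c := by omega
  have h1 : s₁.card ≤ c * G.card := by
    set f : ℕ → ℕ := fun a => if h : a ∈ A ∧ c ≤ a then (greedy_cover hc h.1 h.2).choose else 0
      with hf
    apply Finset.card_le_mul_card_image_of_maps_to (f := f)
    · intro a ha
      simp only [Finset.mem_filter, Finset.mem_Icc, hs₁] at ha
      obtain ⟨⟨_, han⟩, ha2⟩ := ha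
      have hspec := (greedy_cover hc ha2.1 ha2.2).choose_spec
      simp only [hf, dif_pos ha2, hG, Finset.mem_filter, Finset.mem_Icc, Set.mem_setOf_eq]
      refine ⟨⟨?_, ?_⟩, hspec.1⟩
      · have := greedy_le hspec.1; omega
      · omega
    · intro b _
      have : (s₁.filter fun a => f a = b) ⊆ Finset.Ico b (b + c) := by
        intro a ha
        simp only [Finset.mem_filter, hs₁, Finset.mem_Icc] at ha
        obtain ⟨⟨_, ha2⟩, hfa⟩ := ha
        have hspec := (greedy_cover hc ha2.1 ha2.2).choose_spec
        simp only [hf, dif_pos ha2] at hfa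
        rw [hfa] at hspec
        simp only [Finset.mem_Ico]
        omega
      calc _ ≤ (Finset.Ico b (b + c)).card := Finset.card_le_card this
        _ = c := by simp
  have hGc : G.card = cnt {x | greedy A c x} n := rfl
  rw [hGc] at h1
  omega

/-- the open ρ-neighborhood of S -/
def nb (S : Set ℕ) (ρ : ℕ) : Set ℕ := {m | ∃ s ∈ S, m < s + ρ ∧ s < m + ρ}

lemma cnt_nb_le {S : Set ℕ} {ρ : ℕ} (hS : ∀ s ∈ S, 1 ≤ s) (n : ℕ) :
    cnt (nb S ρ) n ≤ 2 * ρ * cnt S (n + ρ) := by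
  classical
  set f : ℕ → ℕ := fun m => if h : m ∈ nb S ρ then h.choose else 0 with hf
  apply Finset.card_le_mul_card_image_of_maps_to (f := f)
  · intro m hm
    simp only [Finset.mem_filter, Finset.mem_Icc] at hm
    obtain ⟨⟨_, hmn⟩, hm2⟩ := hm
    have hspec := hm2.choose_spec
    simp only [hf, dif_pos hm2, Finset.mem_filter, Finset.mem_Icc]
    exact ⟨⟨hS _ hspec.1, by omega⟩, hspec.1⟩
  · intro b _
    have : ((Finset.Icc 1 n).filter (· ∈ nb S ρ) |>.filter fun m => f m = b)
        ⊆ Finset.Ico (b + 1 - ρ) (b + ρ) := by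
      intro m hm
      simp only [Finset.mem_filter, Finset.mem_Icc] at hm
      obtain ⟨⟨_, hm2⟩, hfm⟩ := hm
      have hspec := hm2.choose_spec
      simp only [hf, dif_pos hm2] at hfm
      rw [hfm] at hspec
      simp only [Finset.mem_Ico]
      omega
    calc _ ≤ (Finset.Ico (b + 1 - ρ) (b + ρ)).card := Finset.card_le_card this
      _ ≤ 2 * ρ := by rw [Nat.card_Ico]; omega

end SepAux
set_option maxHeartbeats 2000000 in
open SepAux in
/-- Given a countable family `(Aᵢ)` of subsets of `ℕ` with positive lower density and a
family `(Nᵢ)` of positive integers, there are pairwise disjoint sets `Bᵢ ⊆ Aᵢ` of positive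
lower density with `min Bᵢ ≥ Nᵢ` and such that distinct elements `n ∈ Bᵢ`, `m ∈ Bⱼ`
satisfy `|n − m| ≥ Nᵢ + Nⱼ`. -/
theorem separated_subsets_of_positive_lower_density
    {I : Type*} [Countable I] (A : I → Set ℕ) (N : I → ℕ)
    (hA : ∀ i, 0 < lowerDensity (A i)) (hN : ∀ i, 0 < N i) :
    ∃ B : I → Set ℕ,
      (∀ i j, i ≠ j → Disjoint (B i) (B j)) ∧
      (∀ i, 0 < lowerDensity (B i)) ∧
      (∀ i, B i ⊆ A i) ∧
      (∀ i, ∀ n ∈ B i, N i ≤ n) ∧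
      (∀ i j, ∀ n ∈ B i, ∀ m ∈ B j, n ≠ m → (N i + N j : ℤ) ≤ |(n : ℤ) - (m : ℤ)|) := by
  classical
  obtain ⟨e, he⟩ := Countable.exists_injective_nat I
  -- the per-index factor
  set H : I → ℕ := fun i => (2 * N i + 1) * ⌈(lowerDensity (A i))⁻¹⌉₊ with hHdef
  have hH1 : ∀ i, 2 * N i + 1 ≤ H i := by
    intro i
    have hpos : 0 < ⌈(lowerDensity (A i))⁻¹⌉₊ := by
      rw [Nat.ceil_pos]
      exact inv_pos.2 (hA i)
    calc 2 * N i + 1 = (2 * N i + 1) * 1 := by ring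
      _ ≤ H i := Nat.mul_le_mul_left _ hpos
  have hHd : ∀ i, (2 * N i + 1 : ℝ) * (lowerDensity (A i))⁻¹ ≤ (H i : ℝ) := by
    intro i
    rw [hHdef]
    push_cast
    have := Nat.le_ceil (lowerDensity (A i))⁻¹
    have h0 : (0:ℝ) ≤ 2 * (N i : ℝ) + 1 := by positivity
    nlinarith
  -- running max of H along the enumeration
  set Hm : ℕ → ℕ := fun k =>
    (Finset.range (k+1)).sup (fun m => if h : ∃ j, e j = m then H h.choose else 1) with hHmdef
  have hHm : ∀ (i : I) (k : ℕ), e i ≤ k → H i ≤ Hm k := by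
    intro i k hk
    have hmem : e i ∈ Finset.range (k+1) := by simp; omega
    have hch : (if h : ∃ j, e j = e i then H h.choose else 1) = H i := by
      rw [dif_pos ⟨i, rfl⟩]
      congr 1
      exact he (Exists.choose_spec (⟨i, rfl⟩ : ∃ j, e j = e i))
    calc H i = _ := hch.symm
      _ ≤ Hm k := Finset.le_sup (f := fun m => if h : ∃ j, e j = m then H h.choose else 1) hmem
  have hHm1 : ∀ k, 1 ≤ Hm k := by
    intro k
    have hmem : 0 ∈ Finset.range (k+1) := by simp
    refine le_trans ?_ (Finset.le_sup (f := fun m => if h : ∃ j, e j = m then H h.choose else 1) hmem)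
    show 1 ≤ if h : ∃ j, e j = 0 then H h.choose else 1
    by_cases h : ∃ j, e j = 0
    · rw [dif_pos h]; have := hH1 h.choose; omega
    · rw [dif_neg h]
  -- the separation constants
  set g : ℕ → ℕ := fun m => 2^(m+5) * (Hm m)^2 with hgdef
  have hg1 : ∀ m, 1 ≤ g m := by
    intro m
    have h1 := hHm1 m
    have h2 : 1 ≤ 2^(m+5) := Nat.one_le_two_pow
    calc 1 = 1 * 1 := by ring
      _ ≤ g m := Nat.mul_le_mul h2 (by nlinarith)
  set c : I → ℕ := fun i => ∏ m ∈ Finset.range (e i + 1), g m with hcdef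
  have hgc : ∀ i, g (e i) ≤ c i := by
    intro i
    exact Finset.single_le_prod' (fun m _ => hg1 m) (by simp)
  have hc1 : ∀ i, 1 ≤ c i := fun i => le_trans (hg1 _) (hgc i)
  have hratio : ∀ i j, e i < e j → g (e j) * c i ≤ c j := by
    intro i j hij
    have hsum : e i + 1 + (e j - e i) = e j + 1 := by omega
    have hprod := Finset.prod_range_add g (e i + 1) (e j - e i)
    rw [hsum] at hprod
    have hmem : e j - e i - 1 ∈ Finset.range (e j - e i) := by simp; omega
    have hidx : e i + 1 + (e j - e i - 1) = e j := by omega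
    have hfac : g (e j) ≤ ∏ x ∈ Finset.range (e j - e i), g (e i + 1 + x) := by
      have h0 := Finset.single_le_prod' (f := fun x => g (e i + 1 + x))
        (fun m _ => hg1 _) hmem
      rwa [hidx] at h0
    calc g (e j) * c i ≤ (∏ x ∈ Finset.range (e j - e i), g (e i + 1 + x)) * c i :=
          Nat.mul_le_mul_right _ hfac
      _ = c j := by
          show (∏ x ∈ Finset.range (e j - e i), g (e i + 1 + x)) *
            ∏ m ∈ Finset.range (e i + 1), g m = ∏ m ∈ Finset.range (e j + 1), g m
          rw [hprod]; ring
  have hρH : ∀ i j, 2 * (N i + N j) + 1 ≤ H i * H j := by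
    intro i j
    have h1 : (2 * N i + 1) * (2 * N j + 1) ≤ H i * H j :=
      Nat.mul_le_mul (hH1 i) (hH1 j)
    have h2 : (2 * N i + 1) * (2 * N j + 1) = 4 * (N i * N j) + 2 * N i + 2 * N j + 1 := by ring
    omega
  have hcj : ∀ i j, e i < e j → 2^(e j + 5) * (H i * H j) * c i ≤ c j := by
    intro i j hij
    have h1 : H i * H j ≤ (Hm (e j))^2 := by
      have hi := hHm i (e j) (le_of_lt hij)
      have hj := hHm j (e j) le_rfl
      calc H i * H j ≤ Hm (e j) * Hm (e j) := Nat.mul_le_mul hi hj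
        _ = (Hm (e j))^2 := by ring
    calc 2^(e j + 5) * (H i * H j) * c i ≤ 2^(e j + 5) * (Hm (e j))^2 * c i := by
          exact Nat.mul_le_mul_right _ (Nat.mul_le_mul_left _ h1)
      _ = g (e j) * c i := rfl
      _ ≤ c j := hratio i j hij
  have hNc : ∀ i, 2 * N i + 1 ≤ c i := by
    intro i
    have h1 := hH1 i
    have h2 := hHm i (e i) le_rfl
    have h3 : Hm (e i) ≤ (Hm (e i))^2 := Nat.le_self_pow (by norm_num) _
    have h4 : (Hm (e i))^2 ≤ g (e i) := by
      have : 1 ≤ 2^(e i + 5) := Nat.one_le_two_pow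
      calc (Hm (e i))^2 = 1 * (Hm (e i))^2 := by ring
        _ ≤ g (e i) := Nat.mul_le_mul_right _ this
    have h5 := hgc i
    omega
  clear_value H Hm g c
  -- the sets
  set S : I → Set ℕ := fun i => {x | greedy (A i) (c i) x} with hSdef
  set B : I → Set ℕ := fun i =>
    {x | x ∈ S i ∧ ∀ j, e i < e j → x ∉ nb (S j) (N i + N j)} with hBdef
  have hSA : ∀ i, S i ⊆ A i := fun i x hx => greedy_mem hx
  have hSc : ∀ i, ∀ x ∈ S i, c i ≤ x := fun i x hx => greedy_le hx
  have hBm : ∀ i x, x ∈ B i → x ∈ S i ∧ ∀ j, e i < e j → x ∉ nb (S j) (N i + N j) :=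
    fun i x hx => hx
  have hgr : ∀ i x, x ∈ S i → greedy (A i) (c i) x := fun _ _ h => h
  have hsep : ∀ i j, e i < e j → ∀ n ∈ B i, ∀ m ∈ S j,
      m + (N i + N j) ≤ n ∨ n + (N i + N j) ≤ m := by
    intro i j hij n hn m hm
    have h1 := hn.2 j hij
    simp only [nb, Set.mem_setOf_eq, not_exists] at h1
    have h2 := h1 m
    push_neg at h2
    have := h2 hm
    omega
  have hBS : ∀ i, B i ⊆ A i := fun i x hx => hSA i (hBm i x hx).1
  clear_value S B
  refine ⟨B, ?_, ?_, hBS, ?_, ?_⟩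
  · -- disjoint
    intro i j hij
    rw [Set.disjoint_left]
    intro x hxi hxj
    have hne : e i ≠ e j := fun h => hij (he h)
    have hNi := hN i
    have hNj := hN j
    rcases Nat.lt_or_ge (e i) (e j) with h | h
    · have := hsep i j h x hxi x (hBm j x hxj).1
      omega
    · have := hsep j i (by omega) x hxj x (hBm i x hxi).1
      omega
  · -- density
    intro i
    have hdd : 0 < lowerDensity (A i) := hA i
    set dd : ℝ := lowerDensity (A i) with hdddef
    have hcR : (0:ℝ) < (c i : ℝ) := by exact_mod_cast hc1 i
    have hHdd : (2 * (N i : ℝ) + 1) * dd⁻¹ ≤ (H i : ℝ) := by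
      rw [hdddef]; exact hHd i
    clear_value dd
    set Nb : ℕ → Set ℕ := fun k =>
      if h : ∃ j, e j = k then nb (S h.choose) (N i + N h.choose) else ∅ with hNbdef
    have hincl : ∀ n : ℕ, (Finset.Icc 1 n).filter (· ∈ S i) ⊆
        (Finset.Icc 1 n).filter (· ∈ B i) ∪
          (Finset.Icc (e i + 1) n).biUnion
            (fun k => (Finset.Icc 1 n).filter (· ∈ Nb k)) := by
      intro n x hx
      rw [Finset.mem_filter] at hx
      obtain ⟨hx1, hx2⟩ := hx
      by_cases hxB : x ∈ B i
      · exact Finset.mem_union_left _ (Finset.mem_filter.2 ⟨hx1, hxB⟩)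
      · have hxB' : ∃ j, e i < e j ∧ x ∈ nb (S j) (N i + N j) := by
          simp only [hBdef, Set.mem_setOf_eq, not_and, not_forall] at hxB
          obtain ⟨j, hj1, hj2⟩ := hxB hx2
          exact ⟨j, hj1, not_not.1 hj2⟩
        obtain ⟨j, hj1, hj2⟩ := hxB'
        apply Finset.mem_union_right
        rw [Finset.mem_biUnion]
        refine ⟨e j, ?_, ?_⟩
        · rw [Finset.mem_Icc]
          refine ⟨by omega, ?_⟩
          obtain ⟨s, hs1, hs2, hs3⟩ := hj2
          have hcs := hSc j s hs1
          have hcbig := hcj i j hj1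
          have hxn : x ≤ n := (Finset.mem_Icc.1 hx1).2
          have hpow : e j + 1 ≤ 2^(e j) := by have := @Nat.lt_two_pow_self (e j); omega
          have h1 : 2^(e j + 5) * (2 * (N i + N j) + 1) ≤ c j := by
            calc 2^(e j + 5) * (2 * (N i + N j) + 1)
                = 2^(e j + 5) * (2 * (N i + N j) + 1) * 1 := by ring
              _ ≤ 2^(e j + 5) * (H i * H j) * c i :=
                Nat.mul_le_mul (Nat.mul_le_mul_left _ (hρH i j)) (hc1 i)
              _ ≤ c j := hcbig
          have h2 : 32 * (e j + 1) * (2 * (N i + N j) + 1)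
              ≤ 2^(e j + 5) * (2 * (N i + N j) + 1) := by
            apply Nat.mul_le_mul_right
            calc 32 * (e j + 1) ≤ 32 * 2^(e j) := Nat.mul_le_mul_left _ hpow
              _ = 2^(e j + 5) := by rw [pow_add]; ring
          have h3 : 32 * (e j + 1) * (2 * (N i + N j) + 1) =
              64 * ((e j) * (N i + N j)) + 32 * e j + 64 * (N i + N j) + 32 := by ring
          omega
        · refine Finset.mem_filter.2 ⟨hx1, ?_⟩
          have hex : ∃ j', e j' = e j := ⟨j, rfl⟩
          have hch : hex.choose = j := he hex.choose_spec
          simp only [hNbdef, dif_pos hex, hch]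
          exact hj2
    have hcard : ∀ n : ℕ, cnt (S i) n ≤ cnt (B i) n +
        ∑ k ∈ Finset.Icc (e i + 1) n, cnt (Nb k) n := by
      intro n
      calc cnt (S i) n ≤ ((Finset.Icc 1 n).filter (· ∈ B i) ∪
            (Finset.Icc (e i + 1) n).biUnion
              (fun k => (Finset.Icc 1 n).filter (· ∈ Nb k))).card :=
          Finset.card_le_card (hincl n)
        _ ≤ ((Finset.Icc 1 n).filter (· ∈ B i)).card +
            ((Finset.Icc (e i + 1) n).biUnion
              (fun k => (Finset.Icc 1 n).filter (· ∈ Nb k))).card :=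
          Finset.card_union_le _ _
        _ ≤ cnt (B i) n + ∑ k ∈ Finset.Icc (e i + 1) n, cnt (Nb k) n := by
          unfold cnt
          exact Nat.add_le_add_left
            (Finset.card_biUnion_le (s := Finset.Icc (e i + 1) n)
              (t := fun k => (Finset.Icc 1 n).filter (· ∈ Nb k))) _
    have hk : ∀ n k : ℕ, e i < k →
        (cnt (Nb k) n : ℝ) ≤ n * dd / (c i) / 2^(k+4) := by
      intro n k hke
      by_cases hex : ∃ j, e j = k
      · set j := hex.choose with hjdef
        have hjk : e j = k := hex.choose_spec
        have hNb : Nb k = nb (S j) (N i + N j) := by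
          simp only [hNbdef, dif_pos hex]
          rfl
        by_cases h0 : cnt (Nb k) n = 0
        · rw [h0]
          push_cast
          have : (0:ℝ) ≤ n * dd / (c i) / 2^(k+4) :=
            div_nonneg (div_nonneg (mul_nonneg (Nat.cast_nonneg n) (le_of_lt hdd))
              (le_of_lt hcR)) (by positivity)
          linarith
        · obtain ⟨x, hx⟩ := Finset.card_pos.1 (Nat.pos_of_ne_zero h0)
          rw [Finset.mem_filter] at hx
          obtain ⟨hx1, hx2⟩ := hx
          rw [hNb] at hx2
          obtain ⟨s, hs1, hs2, hs3⟩ := hx2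
          have hcs := hSc j s hs1
          have hije : e i < e j := by omega
          have hcbig := hcj i j hije
          have hxn : x ≤ n := (Finset.mem_Icc.1 hx1).2
          have hcjpos : (0:ℝ) < (c j : ℝ) := by exact_mod_cast hc1 j
          -- ρ ≤ n
          have h1 : 2^(e j + 5) * (2 * (N i + N j) + 1) ≤ c j := by
            calc 2^(e j + 5) * (2 * (N i + N j) + 1)
                = 2^(e j + 5) * (2 * (N i + N j) + 1) * 1 := by ring
              _ ≤ 2^(e j + 5) * (H i * H j) * c i :=
                Nat.mul_le_mul (Nat.mul_le_mul_left _ (hρH i j)) (hc1 i)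
              _ ≤ c j := hcbig
          have h2 : 32 * (2 * (N i + N j) + 1) ≤ 2^(e j + 5) * (2 * (N i + N j) + 1) := by
            apply Nat.mul_le_mul_right
            calc (32:ℕ) = 32 * 1 := by ring
              _ ≤ 32 * 2^(e j) := Nat.mul_le_mul_left _ Nat.one_le_two_pow
              _ = 2^(e j + 5) := by rw [pow_add]; ring
          have hρn : N i + N j ≤ n := by omega
          -- counting
          have hb1 : cnt (nb (S j) (N i + N j)) n
              ≤ 2 * (N i + N j) * cnt (S j) (n + (N i + N j)) :=
            cnt_nb_le (fun s hs => le_trans (hc1 j) (hSc j s hs)) n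
          have hb2 : cnt (S j) (n + (N i + N j)) ≤ (n + (N i + N j)) / (c j) := by
            have := cnt_greedy_le (A j) (hc1 j) (n + (N i + N j))
            simpa only [hSdef] using this
          have hnat : cnt (Nb k) n * c j ≤ 4 * (N i + N j) * n := by
            rw [hNb]
            calc cnt (nb (S j) (N i + N j)) n * c j
                ≤ (2 * (N i + N j) * ((n + (N i + N j)) / (c j))) * c j :=
                Nat.mul_le_mul_right _ (le_trans hb1 (Nat.mul_le_mul_left _ hb2))
              _ = 2 * (N i + N j) * (((n + (N i + N j)) / (c j)) * c j) := by ring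
              _ ≤ 2 * (N i + N j) * (n + (N i + N j)) :=
                Nat.mul_le_mul_left _ (Nat.div_mul_le_self _ _)
              _ ≤ 2 * (N i + N j) * (n + n) := Nat.mul_le_mul_left _ (by omega)
              _ = 4 * (N i + N j) * n := by ring
          have hA1 : (cnt (Nb k) n : ℝ) ≤ 4 * (N i + N j) * n / (c j) := by
            rw [le_div_iff₀ hcjpos]
            exact_mod_cast hnat
          -- lower bound on c j in ℝ
          have hHij : (2 * (N i + N j) + 1 : ℝ) * dd⁻¹ ≤ ((H i : ℝ) * (H j : ℝ)) := by
            have ha := hHd i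
            have hb : (2 * (N j : ℝ) + 1) ≤ (H j : ℝ) := by exact_mod_cast hH1 j
            have hc' : (2 * (N i + N j) + 1 : ℝ) ≤ (2 * (N i : ℝ) + 1) * (2 * (N j : ℝ) + 1) := by
              push_cast
              have h0 : (0:ℝ) ≤ (N i : ℝ) * (N j : ℝ) := by positivity
              nlinarith
            have hinv : (0:ℝ) < dd⁻¹ := inv_pos.2 hdd
            have h2Nj : (0:ℝ) ≤ 2 * (N j : ℝ) + 1 := by positivity
            have hHiNN : (0:ℝ) ≤ (H i : ℝ) := (H i).cast_nonneg
            have hHdc : ((2 * (N i : ℝ) + 1) * dd⁻¹) ≤ (H i : ℝ) := hHdd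
            calc (2 * (N i + N j) + 1 : ℝ) * dd⁻¹
                ≤ ((2 * (N i : ℝ) + 1) * (2 * (N j : ℝ) + 1)) * dd⁻¹ :=
                mul_le_mul_of_nonneg_right hc' (le_of_lt hinv)
              _ = ((2 * (N i : ℝ) + 1) * dd⁻¹) * (2 * (N j : ℝ) + 1) := by ring
              _ ≤ (H i : ℝ) * (H j : ℝ) :=
                mul_le_mul hHdc (by exact_mod_cast hH1 j) h2Nj hHiNN
          have hcjR : (2:ℝ)^(k+5) * ((2 * (N i + N j) + 1 : ℝ) * dd⁻¹) * (c i : ℝ) ≤ (c j : ℝ) := by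
            have hcast : ((2^(e j + 5) * (H i * H j) * c i : ℕ) : ℝ) ≤ (c j : ℝ) := by
              exact_mod_cast hcbig
            push_cast at hcast
            rw [hjk] at hcast
            have hpos2 : (0:ℝ) ≤ (2:ℝ)^(k+5) := by positivity
            calc (2:ℝ)^(k+5) * ((2 * (N i + N j) + 1 : ℝ) * dd⁻¹) * (c i : ℝ)
                ≤ (2:ℝ)^(k+5) * ((H i : ℝ) * (H j : ℝ)) * (c i : ℝ) :=
                mul_le_mul_of_nonneg_right
                  (mul_le_mul_of_nonneg_left hHij hpos2) (le_of_lt hcR)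
              _ ≤ (c j : ℝ) := by
                push_cast
                push_cast at hcast
                linarith
          -- combine
          have hA2 : 4 * ((N i + N j : ℕ) : ℝ) * n / (c j) ≤ n * dd / (c i) / 2^(k+4) := by
            rw [div_div]
            rw [div_le_div_iff₀ hcjpos (mul_pos hcR (by positivity))]
            have hddinv : dd * dd⁻¹ = 1 := mul_inv_cancel₀ (ne_of_gt hdd)
            have hX : (0:ℝ) ≤ (n : ℝ) * (c i) * 2^(k+4) :=
              mul_nonneg (mul_nonneg (Nat.cast_nonneg n) (le_of_lt hcR)) (by positivity)
            have e1 : 4 * ((N i + N j : ℕ) : ℝ) * n * ((c i) * 2^(k+4))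
                = (4 * ((N i + N j : ℕ) : ℝ)) * ((n : ℝ) * (c i) * 2^(k+4)) := by ring
            have e2 : (4 * ((N i + N j : ℕ) : ℝ)) * ((n : ℝ) * (c i) * 2^(k+4))
                ≤ (2 * (2 * ((N i + N j : ℕ) : ℝ) + 1)) * ((n : ℝ) * (c i) * 2^(k+4)) := by
              apply mul_le_mul_of_nonneg_right _ hX
              have h0 : (0:ℝ) ≤ ((N i + N j : ℕ) : ℝ) := Nat.cast_nonneg _
              linarith
            have e3 : (n : ℝ) * dd * ((2:ℝ)^(k+5) * ((2 * ((N i + N j : ℕ) : ℝ) + 1) * dd⁻¹) * (c i))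
                = (2 * (2 * ((N i + N j : ℕ) : ℝ) + 1)) * ((n : ℝ) * (c i) * 2^(k+4)) := by
              have h2p : (2:ℝ)^(k+5) = 2^(k+4) * 2 := pow_succ 2 (k+4)
              calc (n : ℝ) * dd * ((2:ℝ)^(k+5) * ((2 * ((N i + N j : ℕ) : ℝ) + 1) * dd⁻¹) * (c i))
                  = (dd * dd⁻¹) * ((2 * ((N i + N j : ℕ) : ℝ) + 1) * (2:ℝ)^(k+5) * n * (c i)) := by
                    ring
                _ = (2 * ((N i + N j : ℕ) : ℝ) + 1) * ((2:ℝ)^(k+4) * 2) * n * (c i) := by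
                    rw [hddinv, one_mul, h2p]
                _ = (2 * (2 * ((N i + N j : ℕ) : ℝ) + 1)) * ((n : ℝ) * (c i) * 2^(k+4)) := by
                    ring
            have e4 : (n : ℝ) * dd * ((2:ℝ)^(k+5) * ((2 * ((N i + N j : ℕ) : ℝ) + 1) * dd⁻¹) * (c i))
                ≤ (n : ℝ) * dd * (c j) := by
              apply mul_le_mul_of_nonneg_left _
                (mul_nonneg (Nat.cast_nonneg n) (le_of_lt hdd))
              have hcast2 : ((2 * (N i + N j) + 1 : ℕ) : ℝ) = 2 * ((N i + N j : ℕ) : ℝ) + 1 := by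
                push_cast; ring
              calc (2:ℝ)^(k+5) * ((2 * ((N i + N j : ℕ) : ℝ) + 1) * dd⁻¹) * (c i)
                  = (2:ℝ)^(k+5) * ((2 * ((N i + N j) : ℝ) + 1) * dd⁻¹) * (c i) := by push_cast; ring
                _ ≤ (c j : ℝ) := by
                  refine le_trans (le_of_eq ?_) hcjR
                  push_cast
                  ring
            linarith [e1, e2, e3, e4]
          calc (cnt (Nb k) n : ℝ) ≤ 4 * ((N i + N j : ℕ) : ℝ) * n / (c j) := by
                push_cast at hA1 ⊢; linarith
            _ ≤ n * dd / (c i) / 2^(k+4) := hA2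
      · have hNbe : Nb k = ∅ := by simp only [hNbdef, dif_neg hex]
        rw [hNbe]
        have : cnt (∅ : Set ℕ) n = 0 := by simp [cnt]
        rw [this]
        push_cast
        have : (0:ℝ) ≤ n * dd / (c i) / 2^(k+4) :=
          div_nonneg (div_nonneg (mul_nonneg (Nat.cast_nonneg n) (le_of_lt hdd))
            (le_of_lt hcR)) (by positivity)
        linarith
    have hsumb : ∀ n : ℕ, (∑ k ∈ Finset.Icc (e i + 1) n, (cnt (Nb k) n : ℝ))
        ≤ n * dd / (c i) / 8 := by
      intro n
      have hstep : ∀ k ∈ Finset.Icc (e i + 1) n,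
          (cnt (Nb k) n : ℝ) ≤ (n * dd / (c i) / 16) * (1/2:ℝ)^k := by
        intro k hk'
        rw [Finset.mem_Icc] at hk'
        have := hk n k (by omega)
        have hpowdiv : ∀ (a : ℝ), a / 2^(k+4) = (a / 16) * (1/2:ℝ)^k := by
          intro a
          field_simp
          ring_nf
          rw [mul_assoc a, ← mul_pow]; norm_num
        rw [hpowdiv (n * dd / (c i))] at this
        linarith
      calc (∑ k ∈ Finset.Icc (e i + 1) n, (cnt (Nb k) n : ℝ))
          ≤ ∑ k ∈ Finset.Icc (e i + 1) n, (n * dd / (c i) / 16) * (1/2:ℝ)^k :=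
          Finset.sum_le_sum hstep
        _ = (n * dd / (c i) / 16) * ∑ k ∈ Finset.Icc (e i + 1) n, (1/2:ℝ)^k := by
          rw [Finset.mul_sum]
        _ ≤ (n * dd / (c i) / 16) * 2 := by
          have hnn : (0:ℝ) ≤ n * dd / (c i) / 16 :=
            div_nonneg (div_nonneg (mul_nonneg (Nat.cast_nonneg n) (le_of_lt hdd))
              (le_of_lt hcR)) (by norm_num)
          apply mul_le_mul_of_nonneg_left _ hnn
          have hsub : ∑ k ∈ Finset.Icc (e i + 1) n, (1/2:ℝ)^k
              ≤ ∑ k ∈ Finset.range (n + 1), (1/2:ℝ)^k := by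
            apply Finset.sum_le_sum_of_subset_of_nonneg
            · intro k hk'
              rw [Finset.mem_Icc] at hk'
              rw [Finset.mem_range]
              omega
            · intro k _ _
              positivity
          calc ∑ k ∈ Finset.Icc (e i + 1) n, (1/2:ℝ)^k
              ≤ ∑ k ∈ Finset.range (n + 1), (1/2:ℝ)^k := hsub
            _ ≤ 2 := sum_geometric_two_le _
        _ = n * dd / (c i) / 8 := by ring
    have key : ∀ n : ℕ, (cnt (S i) n : ℝ) ≤ (cnt (B i) n : ℝ) + n * dd / (c i) / 8 := by
      intro n
      have h1 := hcard n
      have h1' : (cnt (S i) n : ℝ) ≤ (cnt (B i) n : ℝ)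
          + ∑ k ∈ Finset.Icc (e i + 1) n, (cnt (Nb k) n : ℝ) := by
        exact_mod_cast h1
      linarith [hsumb n]
    have key2 : ∀ n : ℕ, (cnt (A i) n : ℝ) ≤ (c i) * (cnt (S i) n : ℝ) + (c i) := by
      intro n
      have := cnt_le_greedy (A i) (hc1 i) n
      have h' : cnt (A i) n ≤ c i * cnt (S i) n + c i := by
        simpa only [hSdef] using this
      exact_mod_cast h'
    -- eventual lower bound
    have hE1 : ∀ᶠ n : ℕ in atTop, 3/4 * dd < (cnt (A i) n : ℝ) / n := by
      apply Filter.eventually_lt_of_lt_liminf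
      · rw [hdddef, ← lowerDensity_eq]
        linarith
      · exact Filter.isBoundedUnder_of ⟨0, fun n => by positivity⟩
    have hE2 : ∀ᶠ n : ℕ in atTop, max 1 ⌈16 * (c i : ℝ) / dd⌉₊ ≤ n :=
      Filter.eventually_ge_atTop _
    have hEv : ∀ᶠ n : ℕ in atTop, dd / (2 * (c i)) ≤ (cnt (B i) n : ℝ) / n := by
      filter_upwards [hE1, hE2] with n h1 h2
      have hn1 : 1 ≤ n := le_trans (le_max_left _ _) h2
      have hnR : (0:ℝ) < n := by
        have : (1:ℝ) ≤ (n:ℝ) := by exact_mod_cast hn1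
        linarith
      have hn16 : 16 * (c i : ℝ) / dd ≤ n := by
        refine le_trans (Nat.le_ceil _) ?_
        exact_mod_cast le_trans (le_max_right _ _) h2
      have hciddn : 16 * (c i : ℝ) ≤ dd * n := by
        rw [div_le_iff₀ hdd] at hn16
        linarith
      have k1 := key n
      have k2 := key2 n
      have k3 : 3/4 * dd * n ≤ (cnt (A i) n : ℝ) := by
        rw [lt_div_iff₀ hnR] at h1
        linarith
      rw [div_le_div_iff₀ (mul_pos two_pos hcR) hnR]
      have k1' : (c i : ℝ) * (cnt (S i) n : ℝ) ≤ (c i : ℝ) * (cnt (B i) n : ℝ) + n * dd / 8 := by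
        have hm := mul_le_mul_of_nonneg_left k1 (le_of_lt hcR)
        have heq : (c i : ℝ) * ((cnt (B i) n : ℝ) + n * dd / (c i) / 8)
            = (c i : ℝ) * (cnt (B i) n : ℝ) + n * dd / 8 := by
          rw [div_div, mul_add, ← mul_div_assoc,
            mul_div_mul_left _ _ (ne_of_gt hcR)]
        rw [heq] at hm
        linarith
      linarith
    have hBub : Filter.IsBoundedUnder (· ≤ ·) atTop (fun n : ℕ => (cnt (B i) n : ℝ) / n) := by
      apply Filter.isBoundedUnder_of
      refine ⟨1, fun n => ?_⟩
      rcases Nat.eq_zero_or_pos n with h | h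
      · subst h; simp
      · have hnR : (0:ℝ) < n := by exact_mod_cast h
        rw [div_le_one hnR]
        exact_mod_cast cnt_le (B i) n
    have hfin := Filter.le_liminf_of_le (hBub.isCoboundedUnder_ge) hEv
    calc (0:ℝ) < dd / (2 * (c i)) := div_pos hdd (mul_pos two_pos hcR)
      _ ≤ lowerDensity (B i) := by rw [lowerDensity_eq]; exact hfin
  · -- min bound
    intro i n hn
    have := hSc i n (hBm i n hn).1
    have := hNc i
    omega
  · -- separation
    intro i j n hn m hm hnm
    rcases Nat.lt_trichotomy (e i) (e j) with h | h | h
    · rcases hsep i j h n hn m (hBm j m hm).1 with h' | h'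
      · exact le_abs.2 (Or.inl (by push_cast; omega))
      · exact le_abs.2 (Or.inr (by push_cast; omega))
    · have hij : i = j := he h
      subst hij
      have hci := hNc i
      rcases Nat.lt_trichotomy n m with h' | h' | h'
      · have := greedy_sep (hgr i n (hBm i n hn).1) (hgr i m (hBm i m hm).1) h'
        exact le_abs.2 (Or.inr (by push_cast; omega))
      · exact absurd h' hnm
      · have := greedy_sep (hgr i m (hBm i m hm).1) (hgr i n (hBm i n hn).1) h'
        exact le_abs.2 (Or.inl (by push_cast; omega))
    · rcases hsep j i h m hm n (hBm i n hn).1 with h' | h'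
      · exact le_abs.2 (Or.inr (by push_cast; omega))
      · exact le_abs.2 (Or.inl (by push_cast; omega))
end

section
/- Let F be a Furstenberg family, let X₁ and X₂ be Polish topological vector spaces, and let T₁, T₂ be continuous linear operators on X₁ and X₂ respectively. If T₁ is F-hypercyclic and T₂ is hereditarily F-hypercyclic, then the direct sum T₁ ⊕ T₂ acting on X₁ × X₂ is F-hypercyclic. Moreover, if both T₁ and T₂ are hereditarily F-hypercyclic, then T₁ ⊕ T₂ is hereditarily F-hypercyclic. -/
open Filter Topology Set
open scoped Classical

/-- A Furstenberg family: a collection of non-empty subsets of `ℕ` which is hereditary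
upwards. -/
def IsFurstenbergFamily (F : Set (Set ℕ)) : Prop :=
  (∀ A ∈ F, A.Nonempty) ∧ ∀ A ∈ F, ∀ A' : Set ℕ, A ⊆ A' → A' ∈ F

/-- The visit set `N_T(x,V) = {n ∈ ℕ : Tⁿ x ∈ V}`. -/
def visitSet {X : Type*} [TopologicalSpace X] [AddCommGroup X] [Module ℝ X]
    (T : X →L[ℝ] X) (x : X) (V : Set X) : Set ℕ :=
  {n : ℕ | (T ^ n) x ∈ V}

/-- `T` is `F`-hypercyclic: some vector `x` has `N_T(x,V) ∈ F` for every non-empty open `V`. -/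
def FHypercyclic (F : Set (Set ℕ)) {X : Type*} [TopologicalSpace X] [AddCommGroup X]
    [Module ℝ X] (T : X →L[ℝ] X) : Prop :=
  ∃ x : X, ∀ V : Set X, IsOpen V → V.Nonempty → visitSet T x V ∈ F

/-- `T` is hereditarily `F`-hypercyclic. -/
def HereditarilyFHypercyclic (F : Set (Set ℕ)) {X : Type*} [TopologicalSpace X]
    [AddCommGroup X] [Module ℝ X] (T : X →L[ℝ] X) : Prop :=
  ∀ (I : Type) [Countable I] (V : I → Set X) (A : I → Set ℕ),
    (∀ i, IsOpen (V i)) → (∀ i, (V i).Nonempty) → (∀ i, A i ∈ F) →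
    ∃ x : X, ∀ i, visitSet T x (V i) ∩ A i ∈ F


private lemma prodMap_pow {X₁ X₂ : Type*}
    [TopologicalSpace X₁] [AddCommGroup X₁] [Module ℝ X₁]
    [TopologicalSpace X₂] [AddCommGroup X₂] [Module ℝ X₂]
    (T₁ : X₁ →L[ℝ] X₁) (T₂ : X₂ →L[ℝ] X₂) (n : ℕ) (x : X₁ × X₂) :
    ((T₁.prodMap T₂) ^ n) x = ((T₁ ^ n) x.1, (T₂ ^ n) x.2) := by
  induction n with
  | zero => simp
  | succ n ih =>
    rw [pow_succ', pow_succ', pow_succ']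
    simp [ContinuousLinearMap.mul_apply, ih]

/-- If `T₁` is `F`-hypercyclic and `T₂` is hereditarily `F`-hypercyclic then `T₁ ⊕ T₂` is
`F`-hypercyclic; if both are hereditarily `F`-hypercyclic then so is `T₁ ⊕ T₂`. -/
theorem direct_sum_FHypercyclic
    {X₁ X₂ : Type*}
    [TopologicalSpace X₁] [AddCommGroup X₁] [Module ℝ X₁]
    [IsTopologicalAddGroup X₁] [ContinuousSMul ℝ X₁] [PolishSpace X₁]
    [TopologicalSpace X₂] [AddCommGroup X₂] [Module ℝ X₂]
    [IsTopologicalAddGroup X₂] [ContinuousSMul ℝ X₂] [PolishSpace X₂]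
    (F : Set (Set ℕ)) (hF : IsFurstenbergFamily F)
    (T₁ : X₁ →L[ℝ] X₁) (T₂ : X₂ →L[ℝ] X₂) :
    (FHypercyclic F T₁ → HereditarilyFHypercyclic F T₂ →
      FHypercyclic F (T₁.prodMap T₂)) ∧
    (HereditarilyFHypercyclic F T₁ → HereditarilyFHypercyclic F T₂ →
      HereditarilyFHypercyclic F (T₁.prodMap T₂)) := by

  obtain ⟨hne, hup⟩ := hF
  constructor
  · rintro ⟨x₁, hx₁⟩ h₂
    -- countable bases
    obtain ⟨b₁, hb₁c, -, hb₁⟩ := TopologicalSpace.exists_countable_basis X₁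
    obtain ⟨b₂, hb₂c, -, hb₂⟩ := TopologicalSpace.exists_countable_basis X₂
    have hb₁ne : b₁.Nonempty := by
      have : (0 : X₁) ∈ ⋃₀ b₁ := by rw [hb₁.sUnion_eq]; trivial
      obtain ⟨t, ht, -⟩ := this; exact ⟨t, ht⟩
    have hb₂ne : b₂.Nonempty := by
      have : (0 : X₂) ∈ ⋃₀ b₂ := by rw [hb₂.sUnion_eq]; trivial
      obtain ⟨t, ht, -⟩ := this; exact ⟨t, ht⟩
    obtain ⟨e₁, he₁⟩ := Set.Countable.exists_eq_range hb₁c hb₁ne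
    obtain ⟨e₂, he₂⟩ := Set.Countable.exists_eq_range hb₂c hb₂ne
    have he₁mem : ∀ n, e₁ n ∈ b₁ := fun n => he₁ ▸ Set.mem_range_self n
    have he₂mem : ∀ n, e₂ n ∈ b₂ := fun n => he₂ ▸ Set.mem_range_self n
    set I : Type := {p : ℕ × ℕ // (e₁ p.1).Nonempty ∧ (e₂ p.2).Nonempty} with hI
    obtain ⟨x₂, hx₂⟩ := h₂ I (fun i => e₂ i.1.2)
      (fun i => visitSet T₁ x₁ (e₁ i.1.1))
      (fun i => hb₂.isOpen (he₂mem i.1.2)) (fun i => i.2.2)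
      (fun i => hx₁ _ (hb₁.isOpen (he₁mem i.1.1)) i.2.1)
    refine ⟨(x₁, x₂), fun W hW hWne => ?_⟩
    obtain ⟨⟨a, c⟩, hac⟩ := hWne
    obtain ⟨u, v, hu, hv, hau, hcv, huv⟩ := isOpen_prod_iff.1 hW a c hac
    obtain ⟨t, htb, hat, htu⟩ := hb₁.exists_subset_of_mem_open hau hu
    obtain ⟨s, hsb, hcs, hsv⟩ := hb₂.exists_subset_of_mem_open hcv hv
    obtain ⟨n, rfl⟩ := he₁ ▸ htb
    obtain ⟨m, rfl⟩ := he₂ ▸ hsb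
    have hi : ∃ i : I, i.1 = (n, m) := ⟨⟨(n, m), ⟨a, hat⟩, ⟨c, hcs⟩⟩, rfl⟩
    obtain ⟨i, hieq⟩ := hi
    refine hup _ (hx₂ i) _ fun k hk => ?_
    simp only [hieq] at hk
    obtain ⟨hk₂, hk₁⟩ := hk
    show ((T₁.prodMap T₂) ^ k) (x₁, x₂) ∈ W
    rw [prodMap_pow]
    exact huv ⟨htu hk₁, hsv hk₂⟩
  · intro h₁ h₂ I hIc V A hVo hVne hA
    have hsec : ∀ i, ∃ u v, IsOpen u ∧ IsOpen v ∧ u.Nonempty ∧ v.Nonempty ∧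
        u ×ˢ v ⊆ V i := by
      intro i
      obtain ⟨⟨a, c⟩, hac⟩ := hVne i
      obtain ⟨u, v, hu, hv, hau, hcv, huv⟩ := isOpen_prod_iff.1 (hVo i) a c hac
      exact ⟨u, v, hu, hv, ⟨a, hau⟩, ⟨c, hcv⟩, huv⟩
    choose u v hu hv hune hvne huv using hsec
    obtain ⟨x₁, hx₁⟩ := h₁ I u A hu hune hA
    obtain ⟨x₂, hx₂⟩ := h₂ I v (fun i => visitSet T₁ x₁ (u i) ∩ A i) hv hvne hx₁
    refine ⟨(x₁, x₂), fun i => ?_⟩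
    refine hup _ (hx₂ i) _ fun k hk => ?_
    obtain ⟨hk₂, hk₁, hkA⟩ := hk
    refine ⟨?_, hkA⟩
    show ((T₁.prodMap T₂) ^ k) (x₁, x₂) ∈ V i
    rw [prodMap_pow]
    exact huv i ⟨hk₁, hk₂⟩
end

section
/- Let F be a Furstenberg family and let T be a hereditarily F-hypercyclic continuous linear operator on a Polish topological vector space X. Then T is densely hereditarily F-hypercyclic: given a countable family (A_i)_{i∈I} of sets in F and a family (V_i)_{i∈I} of non-empty open subsets of X, the set of vectors x ∈ X such that N_T(x,V_i) ∩ A_i ∈ F for all i ∈ I is dense in X. -/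
open Filter Topology Set
open scoped Classical

/-- A hereditarily `F`-hypercyclic operator on a Polish topological vector space is densely
hereditarily `F`-hypercyclic: for any countable family `(Aᵢ) ⊆ F` and any family `(Vᵢ)` of
non-empty open sets, the set of `x` with `N_T(x,Vᵢ) ∩ Aᵢ ∈ F` for all `i` is dense. -/
theorem hereditarilyFHypercyclic_dense
    {X : Type*} [TopologicalSpace X] [AddCommGroup X] [Module ℝ X]
    [IsTopologicalAddGroup X] [ContinuousSMul ℝ X] [PolishSpace X]
    (F : Set (Set ℕ)) (hF : IsFurstenbergFamily F)
    (T : X →L[ℝ] X) (hT : HereditarilyFHypercyclic F T)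
    (I : Type) [Countable I] (A : I → Set ℕ) (V : I → Set X)
    (hA : ∀ i, A i ∈ F) (hVo : ∀ i, IsOpen (V i)) (hVne : ∀ i, (V i).Nonempty) :
    Dense {x : X | ∀ i, visitSet T x (V i) ∩ A i ∈ F} := by
  -- trivial case: I empty
  rcases isEmpty_or_nonempty I with hI | ⟨⟨i₀⟩⟩
  · have : {x : X | ∀ i, visitSet T x (V i) ∩ A i ∈ F} = Set.univ :=
      eq_univ_of_forall fun x i => isEmptyElim i
    rw [this]; exact dense_univ
  -- univ ∈ F
  have huniv : (Set.univ : Set ℕ) ∈ F := hF.2 (A i₀) (hA i₀) _ (subset_univ _)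
  -- trivial case: X subsingleton
  rcases subsingleton_or_nontrivial X with hX | hX
  · obtain ⟨x, hx⟩ := hT I V A hVo hVne hA
    intro y
    have : y = x := Subsingleton.elim y x
    rw [this]
    exact subset_closure hx
  -- no isolated points
  haveI hperf : ∀ x : X, (𝓝[≠] x).NeBot := by
    intro x
    rw [← mem_closure_iff_nhdsWithin_neBot]
    obtain ⟨y, hy⟩ := exists_ne (0 : X)
    have htend : Tendsto (fun n : ℕ => x + (1 / ((n : ℝ) + 1)) • y) atTop (𝓝 x) := by
      have h1 : Tendsto (fun n : ℕ => (1 / ((n : ℝ) + 1))) atTop (𝓝 0) :=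
        tendsto_one_div_add_atTop_nhds_zero_nat
      have h2 := h1.smul_const y
      rw [zero_smul] at h2
      simpa using (tendsto_const_nhds (x := x)).add h2
    refine mem_closure_of_tendsto htend (Eventually.of_forall fun n => ?_)
    simp only [mem_compl_iff, mem_singleton_iff]
    intro h
    rw [add_eq_left] at h
    apply hy
    have := congrArg (fun z => (((n : ℝ) + 1)) • z) h
    simp only [smul_smul, smul_zero] at this
    rw [mul_one_div, div_self (by positivity), one_smul] at this
    exact this
  -- a vector with dense orbit
  obtain ⟨b, hbc, hbne, hb⟩ := TopologicalSpace.exists_countable_basis X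
  have hbnonempty : b.Nonempty := by
    obtain ⟨z⟩ : Nonempty X := ⟨0⟩
    obtain ⟨s, hsb, -, -⟩ := hb.exists_subset_of_mem_open (mem_univ z) isOpen_univ
    exact ⟨s, hsb⟩
  obtain ⟨f, hf⟩ := hbc.exists_eq_range hbnonempty
  obtain ⟨x, hx⟩ := hT ℕ f (fun _ => Set.univ)
    (fun n => hb.isOpen (hf ▸ ⟨n, rfl⟩))
    (fun n => nonempty_iff_ne_empty.2 (fun h => hbne (h ▸ (hf ▸ ⟨n, rfl⟩ : f n ∈ b))))
    (fun _ => huniv)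
  have horb : Dense (Set.range fun m : ℕ => (T ^ m) x) := by
    rw [dense_iff_inter_open]
    intro O hO ⟨z, hz⟩
    obtain ⟨s, hsb, hzs, hsO⟩ := hb.exists_subset_of_mem_open hz hO
    obtain ⟨n, rfl⟩ : ∃ n, f n = s := by
      have : s ∈ range f := hf ▸ hsb
      exact this
    obtain ⟨m, hm, -⟩ := hF.1 _ (hx n)
    exact ⟨(T ^ m) x, hsO hm, ⟨m, rfl⟩⟩
  -- each power of T hits each nonempty open set
  have hpre : ∀ (W : Set X), IsOpen W → W.Nonempty → ∀ n : ℕ, ∃ w : X, (T ^ n) w ∈ W := by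
    intro W hWo hWne n
    have hfin : Set.Finite ((fun k : ℕ => (T ^ k) x) '' Set.Iio n) :=
      (Set.finite_Iio n).image _
    have hd : Dense ((Set.range fun m : ℕ => (T ^ m) x) \
        ((fun k : ℕ => (T ^ k) x) '' Set.Iio n)) := horb.diff_finite hfin
    obtain ⟨z, hzW, ⟨m, hm⟩, hz2⟩ := hd.inter_open_nonempty W hWo hWne
    have hm' : (T ^ m) x = z := hm
    have hmn : n ≤ m := by
      by_contra h
      exact hz2 ⟨m, Set.mem_Iio.mpr (Nat.lt_of_not_le h), hm⟩
    refine ⟨(T ^ (m - n)) x, ?_⟩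
    have hsum : n + (m - n) = m := Nat.add_sub_cancel' hmn
    have : (T ^ n) ((T ^ (m - n)) x) = (T ^ m) x := by
      rw [← ContinuousLinearMap.mul_apply, ← pow_add, hsum]
    rw [this, hm']
    exact hzW
  -- master application
  rw [dense_iff_inter_open]
  intro U hUo hUne
  set V' : (I × ℕ) ⊕ Unit → Set X := Sum.elim
    (fun p => (⇑(T ^ p.2)) ⁻¹' (V p.1)) (fun _ => U) with hV'
  set A' : (I × ℕ) ⊕ Unit → Set ℕ := Sum.elim (fun p => A p.1) (fun _ => Set.univ) with hA'
  obtain ⟨y, hy⟩ := hT ((I × ℕ) ⊕ Unit) V' A'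
    (by rintro (⟨i, n⟩ | u)
        · exact (hVo i).preimage (T ^ n).continuous
        · exact hUo)
    (by rintro (⟨i, n⟩ | u)
        · obtain ⟨w, hw⟩ := hpre (V i) (hVo i) (hVne i) n
          exact ⟨w, hw⟩
        · exact hUne)
    (by rintro (⟨i, n⟩ | u)
        · exact hA i
        · exact huniv)
  obtain ⟨N, hN, -⟩ := hF.1 _ (hy (Sum.inr ()))
  have hNU : (T ^ N) y ∈ U := hN
  refine ⟨(T ^ N) y, hNU, ?_⟩
  intro i
  have key : visitSet T ((T ^ N) y) (V i) = visitSet T y ((⇑(T ^ N)) ⁻¹' (V i)) := by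
    ext m
    simp only [visitSet, mem_setOf_eq, mem_preimage]
    have : (T ^ m) ((T ^ N) y) = (T ^ N) ((T ^ m) y) := by
      rw [← ContinuousLinearMap.mul_apply, ← ContinuousLinearMap.mul_apply,
        ← pow_add, ← pow_add, Nat.add_comm]
    rw [this]
  rw [key]
  exact hy (Sum.inl (i, N))
end

section
/- Let (X, B, μ, T) be a measure-preserving dynamical system on a probability space, and assume that T is weakly mixing with respect to μ. Let (n_k)_{k≥1} and (k_i)_{i≥0} be increasing sequences of positive integers such that n_{k_i} = O(k_i) as i → ∞. Then for every measurable set V ⊆ X, the averages (1/k_i) Σ_{k=1}^{k_i} 1_V(T^{n_k} x) converge to μ(V) in L²(μ) as i → ∞. -/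
open Filter Topology Set MeasureTheory
open scoped Classical

/-- `T` is weakly mixing with respect to `μ`: for all measurable sets `A`, `B`,
`(1/N) Σ_{n<N} |μ(A ∩ T^{-n}B) − μ(A)μ(B)| → 0`. -/
def WeaklyMixingWrt {X : Type*} [MeasurableSpace X] (T : X → X) (μ : Measure X) : Prop :=
  ∀ A B : Set X, MeasurableSet A → MeasurableSet B →
    Tendsto (fun N : ℕ =>
      (∑ n ∈ Finset.range N,
        |(μ (A ∩ T^[n] ⁻¹' B)).toReal - (μ A).toReal * (μ B).toReal|) / N)
      atTop (nhds 0)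

lemma bh_ind_eq {X : Type*} (T : X → X) (V : Set X) (m : ℕ) (x : X) :
    V.indicator (fun _ => (1:ℝ)) (T^[m] x) = (T^[m] ⁻¹' V).indicator (fun _ => (1:ℝ)) x := by
  by_cases h : T^[m] x ∈ V <;> simp [Set.indicator, h]

lemma bh_ind_mul {X : Type*} (s t : Set X) (x : X) :
    s.indicator (fun _ => (1:ℝ)) x * t.indicator (fun _ => (1:ℝ)) x
      = (s ∩ t).indicator (fun _ => (1:ℝ)) x := by
  by_cases hs : x ∈ s <;> by_cases ht : x ∈ t <;> simp [hs, ht]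

lemma bh_int_f {X : Type*} [MeasurableSpace X] (μ : Measure X) [IsProbabilityMeasure μ]
    (T : X → X) (hT : MeasurePreserving T μ μ) (V : Set X) (hV : MeasurableSet V) (m : ℕ) :
    ∫ x, V.indicator (fun _ => (1:ℝ)) (T^[m] x) ∂μ = (μ V).toReal := by
  simp only [bh_ind_eq]
  rw [MeasureTheory.integral_indicator_const _ ((hT.iterate m).measurable hV)]
  rw [measureReal_def, (hT.iterate m).measure_preimage hV.nullMeasurableSet]
  simp

lemma bh_int_ff {X : Type*} [MeasurableSpace X] (μ : Measure X) [IsProbabilityMeasure μ]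
    (T : X → X) (hT : MeasurePreserving T μ μ) (V : Set X) (hV : MeasurableSet V)
    {a b : ℕ} (h : b ≤ a) :
    ∫ x, (V.indicator (fun _ => (1:ℝ)) (T^[a] x)) * (V.indicator (fun _ => (1:ℝ)) (T^[b] x)) ∂μ
      = (μ (V ∩ T^[a - b] ⁻¹' V)).toReal := by
  simp only [bh_ind_eq, bh_ind_mul]
  rw [MeasureTheory.integral_indicator_const _
    (((hT.iterate a).measurable hV).inter ((hT.iterate b).measurable hV))]
  have hset : T^[a] ⁻¹' V ∩ T^[b] ⁻¹' V = T^[b] ⁻¹' (T^[a-b] ⁻¹' V ∩ V) := by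
    rw [Set.preimage_inter, ← Set.preimage_comp, ← Function.iterate_add, Nat.sub_add_cancel h]
  rw [hset, measureReal_def, (hT.iterate b).measure_preimage
    ((((hT.iterate (a-b)).measurable hV).inter hV).nullMeasurableSet),
    Set.inter_comm]
  simp

lemma bh_integrable_f {X : Type*} [MeasurableSpace X] (μ : Measure X) [IsProbabilityMeasure μ]
    (T : X → X) (hT : MeasurePreserving T μ μ) (V : Set X) (hV : MeasurableSet V) (m : ℕ) :
    Integrable (fun x => V.indicator (fun _ => (1:ℝ)) (T^[m] x)) μ := by
  simp only [bh_ind_eq]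
  exact (integrable_const (1:ℝ)).indicator ((hT.iterate m).measurable hV)

lemma bh_integrable_ff {X : Type*} [MeasurableSpace X] (μ : Measure X) [IsProbabilityMeasure μ]
    (T : X → X) (hT : MeasurePreserving T μ μ) (V : Set X) (hV : MeasurableSet V) (a b : ℕ) :
    Integrable (fun x => (V.indicator (fun _ => (1:ℝ)) (T^[a] x))
      * (V.indicator (fun _ => (1:ℝ)) (T^[b] x))) μ := by
  simp only [bh_ind_eq, bh_ind_mul]
  exact (integrable_const (1:ℝ)).indicator
    (((hT.iterate a).measurable hV).inter ((hT.iterate b).measurable hV))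

lemma bh_integrable_g3 {X : Type*} [MeasurableSpace X] (μ : Measure X) [IsProbabilityMeasure μ]
    (T : X → X) (hT : MeasurePreserving T μ μ) (V : Set X) (hV : MeasurableSet V)
    (c : ℝ) (a b : ℕ) :
    Integrable (fun x => (V.indicator (fun _ => (1:ℝ)) (T^[a] x))
        * (V.indicator (fun _ => (1:ℝ)) (T^[b] x))
        - c * V.indicator (fun _ => (1:ℝ)) (T^[a] x)
        - c * V.indicator (fun _ => (1:ℝ)) (T^[b] x)) μ := by
  exact ((bh_integrable_ff μ T hT V hV a b).sub
    ((bh_integrable_f μ T hT V hV a).const_mul c)).sub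
    ((bh_integrable_f μ T hT V hV b).const_mul c)

lemma bh_integrable_gg {X : Type*} [MeasurableSpace X] (μ : Measure X) [IsProbabilityMeasure μ]
    (T : X → X) (hT : MeasurePreserving T μ μ) (V : Set X) (hV : MeasurableSet V) (a b : ℕ) :
    Integrable (fun x => (V.indicator (fun _ => (1:ℝ)) (T^[a] x) - (μ V).toReal)
      * (V.indicator (fun _ => (1:ℝ)) (T^[b] x) - (μ V).toReal)) μ := by
  set c := (μ V).toReal
  have hfun : (fun x => (V.indicator (fun _ => (1:ℝ)) (T^[a] x) - c)
      * (V.indicator (fun _ => (1:ℝ)) (T^[b] x) - c))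
    = fun x => ((V.indicator (fun _ => (1:ℝ)) (T^[a] x)) * (V.indicator (fun _ => (1:ℝ)) (T^[b] x))
        - c * V.indicator (fun _ => (1:ℝ)) (T^[a] x)
        - c * V.indicator (fun _ => (1:ℝ)) (T^[b] x)) + c * c := by
    funext x; ring
  rw [hfun]
  exact (bh_integrable_g3 μ T hT V hV c a b).add (integrable_const _)

lemma bh_int_gg {X : Type*} [MeasurableSpace X] (μ : Measure X) [IsProbabilityMeasure μ]
    (T : X → X) (hT : MeasurePreserving T μ μ) (V : Set X) (hV : MeasurableSet V)
    {a b : ℕ} (h : b ≤ a) :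
    ∫ x, (V.indicator (fun _ => (1:ℝ)) (T^[a] x) - (μ V).toReal)
      * (V.indicator (fun _ => (1:ℝ)) (T^[b] x) - (μ V).toReal) ∂μ
      = (μ (V ∩ T^[a - b] ⁻¹' V)).toReal - (μ V).toReal * (μ V).toReal := by
  set c := (μ V).toReal with hc
  have hfun : (fun x => (V.indicator (fun _ => (1:ℝ)) (T^[a] x) - c)
      * (V.indicator (fun _ => (1:ℝ)) (T^[b] x) - c))
    = fun x => ((V.indicator (fun _ => (1:ℝ)) (T^[a] x)) * (V.indicator (fun _ => (1:ℝ)) (T^[b] x))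
        - c * V.indicator (fun _ => (1:ℝ)) (T^[a] x)
        - c * V.indicator (fun _ => (1:ℝ)) (T^[b] x)) + c * c := by
    funext x; ring
  have I2 : Integrable (fun x => (V.indicator (fun _ => (1:ℝ)) (T^[a] x))
        * (V.indicator (fun _ => (1:ℝ)) (T^[b] x))
        - c * V.indicator (fun _ => (1:ℝ)) (T^[a] x)) μ :=
    (bh_integrable_ff μ T hT V hV a b).sub ((bh_integrable_f μ T hT V hV a).const_mul c)
  rw [hfun, integral_add (bh_integrable_g3 μ T hT V hV c a b) (integrable_const _),
    integral_sub I2 ((bh_integrable_f μ T hT V hV b).const_mul c),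
    integral_sub (bh_integrable_ff μ T hT V hV a b)
      ((bh_integrable_f μ T hT V hV a).const_mul c),
    integral_const_mul, integral_const_mul, bh_int_ff μ T hT V hV h,
    bh_int_f μ T hT V hV a, bh_int_f μ T hT V hV b]
  simp only [integral_const, measureReal_def, measure_univ, ENNReal.toReal_one, smul_eq_mul, one_mul]
  ring

lemma bh_expand {X : Type*} [MeasurableSpace X] (μ : Measure X) [IsProbabilityMeasure μ]
    (T : X → X) (hT : MeasurePreserving T μ μ) (V : Set X) (hV : MeasurableSet V)
    (n : ℕ → ℕ) (K : ℕ) (hK : 0 < K) :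
    ∫ x, ((∑ j ∈ Finset.Icc 1 K, V.indicator (fun _ => (1:ℝ)) (T^[n j] x)) / K
        - (μ V).toReal) ^ 2 ∂μ
    = (∑ j ∈ Finset.Icc 1 K, ∑ l ∈ Finset.Icc 1 K,
        ∫ x, (V.indicator (fun _ => (1:ℝ)) (T^[n j] x) - (μ V).toReal)
          * (V.indicator (fun _ => (1:ℝ)) (T^[n l] x) - (μ V).toReal) ∂μ) / (K ^ 2 : ℝ) := by
  set c := (μ V).toReal with hc
  have hK0 : (K : ℝ) ≠ 0 := Nat.cast_ne_zero.mpr hK.ne'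
  have hcard : ((Finset.Icc 1 K).card : ℝ) = (K : ℝ) := by
    rw [Nat.card_Icc]; simp
  have hpt : ∀ x, ((∑ j ∈ Finset.Icc 1 K, V.indicator (fun _ => (1:ℝ)) (T^[n j] x)) / K - c) ^ 2
      = (∑ j ∈ Finset.Icc 1 K, ∑ l ∈ Finset.Icc 1 K,
          (V.indicator (fun _ => (1:ℝ)) (T^[n j] x) - c)
          * (V.indicator (fun _ => (1:ℝ)) (T^[n l] x) - c)) / (K ^ 2 : ℝ) := by
    intro x
    have h1 : (∑ j ∈ Finset.Icc 1 K, V.indicator (fun _ => (1:ℝ)) (T^[n j] x)) / K - c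
        = (∑ j ∈ Finset.Icc 1 K, (V.indicator (fun _ => (1:ℝ)) (T^[n j] x) - c)) / K := by
      rw [Finset.sum_sub_distrib, Finset.sum_const, nsmul_eq_mul, hcard]
      field_simp
    rw [h1, div_pow, sq, Finset.sum_mul_sum]
  simp only [hpt]
  rw [integral_div, integral_finset_sum _ (fun j _ => integrable_finset_sum _
    (fun l _ => bh_integrable_gg μ T hT V hV (n j) (n l)))]
  congr 1
  exact Finset.sum_congr rfl fun j _ => integral_finset_sum _
    (fun l _ => bh_integrable_gg μ T hT V hV (n j) (n l))

lemma bh_row (n : ℕ → ℕ) (hn : StrictMono n) (K j : ℕ) (hj : j ∈ Finset.Icc 1 K)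
    (aval : ℕ → ℝ) (h0 : ∀ m, 0 ≤ aval m) (h1 : ∀ m, aval m ≤ 1) :
    ∑ l ∈ Finset.Icc 1 K, aval ((n j - n l) + (n l - n j))
      ≤ 1 + 2 * ∑ m ∈ Finset.range (n K + 1), aval m := by
  set B := ∑ m ∈ Finset.range (n K + 1), aval m with hB
  have hjK : j ≤ K := (Finset.mem_Icc.mp hj).2
  set s := Finset.Icc 1 K with hs
  -- split the sum
  have hsplit1 := Finset.sum_filter_add_sum_filter_not s (fun l => l < j)
    (fun l => aval ((n j - n l) + (n l - n j)))
  have hsplit2 := Finset.sum_filter_add_sum_filter_not (s.filter (fun l => ¬ l < j))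
    (fun l => l = j) (fun l => aval ((n j - n l) + (n l - n j)))
  -- bound on the lower part
  have hlow : ∑ l ∈ s.filter (fun l => l < j), aval ((n j - n l) + (n l - n j)) ≤ B := by
    have hre : ∑ l ∈ s.filter (fun l => l < j), aval ((n j - n l) + (n l - n j))
        = ∑ l ∈ s.filter (fun l => l < j), aval (n j - n l) := by
      refine Finset.sum_congr rfl fun l hl => ?_
      have hlj : l < j := (Finset.mem_filter.mp hl).2
      have := hn hlj
      congr 1; omega
    rw [hre]
    have hinj : Set.InjOn (fun l => n j - n l) (s.filter (fun l => l < j)) := by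
      intro a ha b hb hab
      have ha' : a < j := (Finset.mem_filter.mp ha).2
      have hb' : b < j := (Finset.mem_filter.mp hb).2
      have h1' := hn ha'; have h2' := hn hb'
      exact hn.injective (by simp only at hab; omega)
    rw [← Finset.sum_image hinj]
    refine Finset.sum_le_sum_of_subset_of_nonneg ?_ (fun m _ _ => h0 m)
    intro m hm
    obtain ⟨l, hl, rfl⟩ := Finset.mem_image.mp hm
    have : n j ≤ n K := hn.monotone hjK
    simp only [Finset.mem_range]; omega
  -- bound on the upper part
  have hhigh : ∑ l ∈ (s.filter (fun l => ¬ l < j)).filter (fun l => ¬ l = j),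
      aval ((n j - n l) + (n l - n j)) ≤ B := by
    set t := (s.filter (fun l => ¬ l < j)).filter (fun l => ¬ l = j) with ht
    have hmem : ∀ l ∈ t, j < l := by
      intro l hl
      have h1' := (Finset.mem_filter.mp (Finset.mem_filter.mp hl).1).2
      have h2' := (Finset.mem_filter.mp hl).2
      omega
    have hre : ∑ l ∈ t, aval ((n j - n l) + (n l - n j))
        = ∑ l ∈ t, aval (n l - n j) := by
      refine Finset.sum_congr rfl fun l hl => ?_
      have := hn (hmem l hl)
      congr 1; omega
    rw [hre]
    have hinj : Set.InjOn (fun l => n l - n j) t := by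
      intro a ha b hb hab
      have h1' := hn (hmem a ha); have h2' := hn (hmem b hb)
      exact hn.injective (by simp only at hab; omega)
    rw [← Finset.sum_image hinj]
    refine Finset.sum_le_sum_of_subset_of_nonneg ?_ (fun m _ _ => h0 m)
    intro m hm
    obtain ⟨l, hl, rfl⟩ := Finset.mem_image.mp hm
    have hlK : l ≤ K := by
      have := (Finset.mem_filter.mp (Finset.mem_filter.mp hl).1).1
      exact (Finset.mem_Icc.mp (by rwa [hs] at this)).2
    have : n l ≤ n K := hn.monotone hlK
    simp only [Finset.mem_range]; omega
  -- bound on the diagonal part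
  have hdiag : ∑ l ∈ (s.filter (fun l => ¬ l < j)).filter (fun l => l = j),
      aval ((n j - n l) + (n l - n j)) ≤ 1 := by
    have hsub : (s.filter (fun l => ¬ l < j)).filter (fun l => l = j) ⊆ {j} := by
      intro l hl
      simp only [Finset.mem_singleton]
      exact (Finset.mem_filter.mp hl).2
    calc ∑ l ∈ (s.filter (fun l => ¬ l < j)).filter (fun l => l = j),
          aval ((n j - n l) + (n l - n j))
        ≤ ∑ l ∈ ({j} : Finset ℕ), aval ((n j - n l) + (n l - n j)) :=
          Finset.sum_le_sum_of_subset_of_nonneg hsub (fun m _ _ => h0 _)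
      _ = aval ((n j - n j) + (n j - n j)) := Finset.sum_singleton _ _
      _ ≤ 1 := h1 _
  have hBnn : 0 ≤ B := Finset.sum_nonneg fun m _ => h0 m
  linarith

set_option maxHeartbeats 2000000 in
/-- (A Blum–Hanson type lemma.) If `T` is a weakly mixing measure-preserving transformation
of a probability space, `(n_k)` and `(k_i)` are increasing sequences of positive integers
with `n_{k_i} = O(k_i)`, then for any measurable `V`, the averages
`(1/k_i) Σ_{k=1}^{k_i} 1_V(T^{n_k} x)` converge to `μ(V)` in `L²(μ)`. -/
theorem blumHanson_along_subsequence
    {X : Type*} [MeasurableSpace X] (μ : Measure X) [IsProbabilityMeasure μ]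
    (T : X → X) (hT : MeasurePreserving T μ μ) (hwm : WeaklyMixingWrt T μ)
    (n k : ℕ → ℕ) (hn : StrictMono n) (hk : StrictMono k)
    (hnpos : ∀ j, 0 < n j) (hkpos : ∀ i, 0 < k i)
    (hO : ∃ C : ℝ, ∀ i, (n (k i) : ℝ) ≤ C * k i)
    (V : Set X) (hV : MeasurableSet V) :
    Tendsto (fun i : ℕ =>
      ∫ x, ((∑ j ∈ Finset.Icc 1 (k i),
          Set.indicator V (fun _ => (1 : ℝ)) (T^[n j] x)) / (k i)
        - (μ V).toReal) ^ 2 ∂μ) atTop (nhds 0) := by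
  obtain ⟨C, hC⟩ := hO
  set c := (μ V).toReal with hc
  set aval : ℕ → ℝ := fun m => |(μ (V ∩ T^[m] ⁻¹' V)).toReal - c * c| with haval
  have h0 : ∀ m, 0 ≤ aval m := fun m => abs_nonneg _
  have hc0 : 0 ≤ c := ENNReal.toReal_nonneg
  have hc1 : c ≤ 1 := by
    rw [hc]
    exact ENNReal.toReal_le_of_le_ofReal zero_le_one (by simpa using prob_le_one (μ := μ) (s := V))
  have h1 : ∀ m, aval m ≤ 1 := by
    intro m
    have hm0 : 0 ≤ (μ (V ∩ T^[m] ⁻¹' V)).toReal := ENNReal.toReal_nonneg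
    have hm1 : (μ (V ∩ T^[m] ⁻¹' V)).toReal ≤ 1 :=
      ENNReal.toReal_le_of_le_ofReal zero_le_one (by simpa using prob_le_one)
    rw [haval, abs_le]
    constructor <;> nlinarith
  -- absolute value of each term
  have habs : ∀ a b : ℕ,
      |∫ x, (V.indicator (fun _ => (1:ℝ)) (T^[a] x) - c)
        * (V.indicator (fun _ => (1:ℝ)) (T^[b] x) - c) ∂μ| = aval ((a - b) + (b - a)) := by
    intro a b
    rcases le_total b a with h | h
    · have hd : (a - b) + (b - a) = a - b := by omega
      rw [hd, bh_int_gg μ T hT V hV h]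
    · have hd : (a - b) + (b - a) = b - a := by omega
      have hcomm : (fun x => (V.indicator (fun _ => (1:ℝ)) (T^[a] x) - c)
          * (V.indicator (fun _ => (1:ℝ)) (T^[b] x) - c))
        = (fun x => (V.indicator (fun _ => (1:ℝ)) (T^[b] x) - c)
          * (V.indicator (fun _ => (1:ℝ)) (T^[a] x) - c)) := by
        funext x; ring
      rw [hd, hcomm, bh_int_gg μ T hT V hV h]
  -- the key bound on the integral
  set E : ℕ → ℝ := fun i => ∫ x, ((∑ j ∈ Finset.Icc 1 (k i),
      Set.indicator V (fun _ => (1 : ℝ)) (T^[n j] x)) / (k i) - c) ^ 2 ∂μ with hE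
  set B : ℕ → ℝ := fun i => ∑ m ∈ Finset.range (n (k i) + 1), aval m with hBdef
  have hBnn : ∀ i, 0 ≤ B i := fun i => Finset.sum_nonneg fun m _ => h0 m
  have hEnn : ∀ i, 0 ≤ E i := fun i => integral_nonneg fun x => sq_nonneg _
  have hEle : ∀ i, E i ≤ (1 + 2 * B i) / (k i) := by
    intro i
    set K := k i with hK
    have hKpos : 0 < K := hkpos i
    have hKR : (0:ℝ) < K := by exact_mod_cast hKpos
    rw [hE]
    simp only
    rw [bh_expand μ T hT V hV n K hKpos]
    have hsum : |∑ j ∈ Finset.Icc 1 K, ∑ l ∈ Finset.Icc 1 K,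
        ∫ x, (V.indicator (fun _ => (1:ℝ)) (T^[n j] x) - c)
          * (V.indicator (fun _ => (1:ℝ)) (T^[n l] x) - c) ∂μ|
        ≤ K * (1 + 2 * B i) := by
      calc |∑ j ∈ Finset.Icc 1 K, ∑ l ∈ Finset.Icc 1 K,
          ∫ x, (V.indicator (fun _ => (1:ℝ)) (T^[n j] x) - c)
            * (V.indicator (fun _ => (1:ℝ)) (T^[n l] x) - c) ∂μ|
          ≤ ∑ j ∈ Finset.Icc 1 K, |∑ l ∈ Finset.Icc 1 K,
            ∫ x, (V.indicator (fun _ => (1:ℝ)) (T^[n j] x) - c)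
              * (V.indicator (fun _ => (1:ℝ)) (T^[n l] x) - c) ∂μ| :=
            Finset.abs_sum_le_sum_abs _ _
        _ ≤ ∑ j ∈ Finset.Icc 1 K, ∑ l ∈ Finset.Icc 1 K,
            |∫ x, (V.indicator (fun _ => (1:ℝ)) (T^[n j] x) - c)
              * (V.indicator (fun _ => (1:ℝ)) (T^[n l] x) - c) ∂μ| :=
            Finset.sum_le_sum fun j _ => Finset.abs_sum_le_sum_abs _ _
        _ = ∑ j ∈ Finset.Icc 1 K, ∑ l ∈ Finset.Icc 1 K,
            aval ((n j - n l) + (n l - n j)) := by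
            refine Finset.sum_congr rfl fun j _ => Finset.sum_congr rfl fun l _ => ?_
            exact habs (n j) (n l)
        _ ≤ ∑ j ∈ Finset.Icc 1 K, (1 + 2 * ∑ m ∈ Finset.range (n K + 1), aval m) :=
            Finset.sum_le_sum fun j hj => bh_row n hn K j hj aval h0 h1
        _ = K * (1 + 2 * B i) := by
            rw [Finset.sum_const, Nat.card_Icc, nsmul_eq_mul]
            simp [hBdef, hK]
    calc (∑ j ∈ Finset.Icc 1 K, ∑ l ∈ Finset.Icc 1 K,
          ∫ x, (V.indicator (fun _ => (1:ℝ)) (T^[n j] x) - c)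
            * (V.indicator (fun _ => (1:ℝ)) (T^[n l] x) - c) ∂μ) / (K ^ 2 : ℝ)
        ≤ (K * (1 + 2 * B i)) / (K ^ 2 : ℝ) := by
          apply div_le_div_of_nonneg_right ?_ (by positivity)
          exact le_trans (le_abs_self _) hsum
      _ = (1 + 2 * B i) / K := by
          field_simp
  -- the upper bound tends to zero
  set Nf : ℕ → ℕ := fun i => n (k i) + 1 with hNf
  have hNtop : Tendsto Nf atTop atTop := by
    have hsm : StrictMono Nf := fun a b h => by
      simpa [hNf] using Nat.add_lt_add_right (hn (hk h)) 1
    exact hsm.tendsto_atTop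
  have hwmV := hwm V V hV hV
  have hBN : Tendsto (fun i => B i / (Nf i : ℝ)) atTop (nhds 0) := hwmV.comp hNtop
  have hCpos : 0 ≤ C := by
    have h1' := hC 0
    have h2' : (0:ℝ) < k 0 := by exact_mod_cast hkpos 0
    have h3' : (0:ℝ) < n (k 0) := by exact_mod_cast hnpos (k 0)
    nlinarith
  set u : ℕ → ℝ := fun i => 1 / (k i : ℝ) + 2 * (C + 1) * (B i / (Nf i : ℝ)) with hu
  have hEu : ∀ i, E i ≤ u i := by
    intro i
    have hKR : (0:ℝ) < k i := by exact_mod_cast hkpos i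
    have hNR : (0:ℝ) < Nf i := by
      have : 0 < Nf i := Nat.succ_pos _
      exact_mod_cast this
    have hNle : (Nf i : ℝ) ≤ (C + 1) * k i := by
      have h1' := hC i
      have h2' : (1:ℝ) ≤ k i := by exact_mod_cast hkpos i
      have : (Nf i : ℝ) = (n (k i) : ℝ) + 1 := by rw [hNf]; push_cast; ring
      rw [this]; nlinarith
    have hdiv : B i / (k i : ℝ) ≤ (C + 1) * (B i / (Nf i : ℝ)) := by
      rw [div_le_iff₀ hKR]
      calc B i = (B i / (Nf i : ℝ)) * (Nf i : ℝ) := (div_mul_cancel₀ _ hNR.ne').symm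
        _ ≤ (B i / (Nf i : ℝ)) * ((C + 1) * k i) :=
            mul_le_mul_of_nonneg_left hNle (div_nonneg (hBnn i) hNR.le)
        _ = (C + 1) * (B i / (Nf i : ℝ)) * k i := by ring
    calc E i ≤ (1 + 2 * B i) / (k i) := hEle i
      _ = 1 / (k i : ℝ) + 2 * (B i / (k i : ℝ)) := by ring
      _ ≤ 1 / (k i : ℝ) + 2 * ((C + 1) * (B i / (Nf i : ℝ))) := by linarith
      _ = u i := by rw [hu]; ring
  have hu0 : Tendsto u atTop (nhds 0) := by
    have h1' : Tendsto (fun i => 1 / (k i : ℝ)) atTop (nhds 0) :=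
      tendsto_one_div_atTop_nhds_zero_nat.comp hk.tendsto_atTop
    have h2' : Tendsto (fun i => 2 * (C + 1) * (B i / (Nf i : ℝ))) atTop (nhds 0) := by
      simpa using hBN.const_mul (2 * (C + 1))
    simpa [hu, one_div] using h1'.add h2'
  exact tendsto_of_tendsto_of_tendsto_of_le_of_le tendsto_const_nhds hu0 hEnn hEu
end

section
/- Let (X, B, μ, T) be a measure-preserving dynamical system on a probability space, and assume that T is weakly mixing with respect to μ. Let A ⊆ ℕ have positive upper density, and let V ⊆ X be a measurable set with μ(V) > 0. Then for μ-almost every x ∈ X, the set A ∩ {n ∈ ℕ : Tⁿx ∈ V} has positive upper density. -/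
open Filter Topology Set MeasureTheory
open scoped Classical

/-- The upper density of a set `A ⊆ ℕ`: `limsup_{N→∞} #(A ∩ [1,N]) / N`. -/
noncomputable def upperDensity (A : Set ℕ) : ℝ :=
  Filter.atTop.limsup fun N : ℕ => (((Finset.Icc 1 N).filter (· ∈ A)).card : ℝ) / N

set_option linter.unusedSectionVars false
set_option linter.unusedVariables false
set_option maxHeartbeats 1000000

section UDaux

/-- Counting lemma: each difference value is attained at most twice. -/
lemma aux_count {b : ℕ → ℝ} (hb : ∀ k, 0 ≤ b k) {N m : ℕ} (hm : m ∈ Finset.Icc 1 N) :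
    ∑ n ∈ Finset.Icc 1 N, b (Nat.dist m n) ≤ 2 * ∑ k ∈ Finset.range N, b k := by
  simp only [Finset.mem_Icc] at hm
  have hsplit : ∑ n ∈ Finset.Ioc 0 m, b (Nat.dist m n) + ∑ n ∈ Finset.Ioc m N, b (Nat.dist m n)
      = ∑ n ∈ Finset.Icc 1 N, b (Nat.dist m n) := by
    rw [← Finset.Icc_add_one_left_eq_Ioc 0]
    exact Finset.sum_Ioc_consecutive _ (Nat.zero_le m) hm.2
  have h1 : ∑ n ∈ Finset.Ioc 0 m, b (Nat.dist m n) = ∑ k ∈ Finset.range m, b k := by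
    apply Finset.sum_nbij' (fun n => m - n) (fun k => m - k)
    · intro a ha; simp only [Finset.mem_Ioc, Finset.mem_range] at *; omega
    · intro a ha; simp only [Finset.mem_Ioc, Finset.mem_range] at *; omega
    · intro a ha; simp only [Finset.mem_Ioc] at ha; omega
    · intro a ha; simp only [Finset.mem_range] at ha; omega
    · intro a ha; simp only [Finset.mem_Ioc] at ha
      congr 1
      have : Nat.dist m a = m - a := Nat.dist_eq_sub_of_le_right ha.2
      omega
  have h2 : ∑ n ∈ Finset.Ioc m N, b (Nat.dist m n) = ∑ k ∈ Finset.Ioc 0 (N - m), b k := by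
    apply Finset.sum_nbij' (fun n => n - m) (fun k => k + m)
    · intro a ha; simp only [Finset.mem_Ioc] at *; omega
    · intro a ha; simp only [Finset.mem_Ioc] at *; omega
    · intro a ha; simp only [Finset.mem_Ioc] at ha; omega
    · intro a ha; simp only [Finset.mem_Ioc] at ha; omega
    · intro a ha; simp only [Finset.mem_Ioc] at ha
      congr 1
      have : Nat.dist m a = a - m := Nat.dist_eq_sub_of_le ha.1.le
      omega
  have l1 : ∑ k ∈ Finset.range m, b k ≤ ∑ k ∈ Finset.range N, b k :=
    Finset.sum_le_sum_of_subset_of_nonneg (Finset.range_subset_range.2 hm.2) (fun k _ _ => hb k)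
  have l2 : ∑ k ∈ Finset.Ioc 0 (N - m), b k ≤ ∑ k ∈ Finset.range N, b k := by
    apply Finset.sum_le_sum_of_subset_of_nonneg _ (fun k _ _ => hb k)
    intro k hk
    simp only [Finset.mem_Ioc, Finset.mem_range] at *; omega
  linarith [hsplit, h1 ▸ l1, h2 ▸ l2]

variable {X : Type*} [MeasurableSpace X] {μ : Measure X} [IsProbabilityMeasure μ]
  {T : X → X} {V : Set X}

lemma aux_meas (hT : MeasurePreserving T μ μ) (hV : MeasurableSet V) (n : ℕ) :
    MeasurableSet (T^[n] ⁻¹' V) := (hT.measurable.iterate n) hV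

lemma aux_shift (hT : MeasurePreserving T μ μ) (hV : MeasurableSet V) (m k : ℕ) :
    μ (T^[m] ⁻¹' V ∩ T^[k + m] ⁻¹' V) = μ (V ∩ T^[k] ⁻¹' V) := by
  have hset : T^[m] ⁻¹' V ∩ T^[k + m] ⁻¹' V = T^[m] ⁻¹' (V ∩ T^[k] ⁻¹' V) := by
    ext x
    simp [Set.mem_preimage, Function.iterate_add_apply]
  rw [hset]
  exact (hT.iterate m).measure_preimage ((hV.inter (aux_meas hT hV k)).nullMeasurableSet)

lemma aux_dist (hT : MeasurePreserving T μ μ) (hV : MeasurableSet V) (m n : ℕ) :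
    μ (T^[m] ⁻¹' V ∩ T^[n] ⁻¹' V) = μ (V ∩ T^[Nat.dist m n] ⁻¹' V) := by
  rcases le_total m n with h | h
  · have h2 : (n - m) + m = n := by omega
    rw [Nat.dist_eq_sub_of_le h, ← h2, aux_shift hT hV m (n - m)]; simp
  · have h2 : (m - n) + n = m := by omega
    rw [Nat.dist_eq_sub_of_le_right h, Set.inter_comm, ← h2, aux_shift hT hV n (m - n)]; simp

/-- The centered indicator of the `n`-th preimage of `V`. -/
noncomputable def gfun (T : X → X) (V : Set X) (μ : Measure X) (n : ℕ) : X → ℝ :=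
  fun x => (T^[n] ⁻¹' V).indicator (1 : X → ℝ) x - (μ V).toReal

lemma gfun_meas (hT : MeasurePreserving T μ μ) (hV : MeasurableSet V) (n : ℕ) :
    Measurable (gfun T V μ n) :=
  ((measurable_one.indicator (aux_meas hT hV n)).sub measurable_const)

lemma gfun_abs_le (hT : MeasurePreserving T μ μ) (hV : MeasurableSet V) (n : ℕ) (x : X) :
    |gfun T V μ n x| ≤ 1 := by
  have h0 : (0:ℝ) ≤ (μ V).toReal := ENNReal.toReal_nonneg
  have h1 : (μ V).toReal ≤ 1 := by
    have := prob_le_one (μ := μ) (s := V)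
    simpa using ENNReal.toReal_le_of_le_ofReal zero_le_one (by simpa using this)
  unfold gfun
  by_cases hx : x ∈ T^[n] ⁻¹' V <;> simp [hx, abs_le] <;> linarith

lemma gfun_int (hT : MeasurePreserving T μ μ) (hV : MeasurableSet V) (m n : ℕ) :
    Integrable (fun x => gfun T V μ m x * gfun T V μ n x) μ := by
  apply Integrable.mono' (integrable_const 1)
    (((gfun_meas hT hV m).mul (gfun_meas hT hV n)).aestronglyMeasurable)
  filter_upwards with x
  rw [Real.norm_eq_abs, Pi.mul_apply, abs_mul]
  calc |gfun T V μ m x| * |gfun T V μ n x| ≤ 1 * 1 := by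
        apply mul_le_mul (gfun_abs_le hT hV m x) (gfun_abs_le hT hV n x) (abs_nonneg _) zero_le_one
    _ = 1 := by ring

lemma integral_gg (hT : MeasurePreserving T μ μ) (hV : MeasurableSet V) (m n : ℕ) :
    ∫ x, gfun T V μ m x * gfun T V μ n x ∂μ
      = (μ (V ∩ T^[Nat.dist m n] ⁻¹' V)).toReal - (μ V).toReal * (μ V).toReal := by
  set c : ℝ := (μ V).toReal with hc
  have him : ∀ k : ℕ, ∫ x, (T^[k] ⁻¹' V).indicator (1 : X → ℝ) x ∂μ = c := by
    intro k
    rw [integral_indicator_one (aux_meas hT hV k), hc]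
    exact congrArg ENNReal.toReal ((hT.iterate k).measure_preimage hV.nullMeasurableSet)
  have hprod : ∫ x, (T^[m] ⁻¹' V).indicator (1:X→ℝ) x * (T^[n] ⁻¹' V).indicator (1:X→ℝ) x ∂μ
      = (μ (V ∩ T^[Nat.dist m n] ⁻¹' V)).toReal := by
    have : (fun x => (T^[m] ⁻¹' V).indicator (1:X→ℝ) x * (T^[n] ⁻¹' V).indicator (1:X→ℝ) x)
        = (T^[m] ⁻¹' V ∩ T^[n] ⁻¹' V).indicator (1:X→ℝ) := by
      rw [Set.inter_indicator_one]; rfl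
    rw [this, integral_indicator_one ((aux_meas hT hV m).inter (aux_meas hT hV n)),
      measureReal_def, aux_dist hT hV m n]
  have intm : Integrable ((T^[m] ⁻¹' V).indicator (1:X→ℝ)) μ := by
    rw [integrable_indicator_iff (aux_meas hT hV m)]
    exact integrableOn_const (C := (1:ℝ)) (measure_ne_top μ _) (by simp)
  have intn : Integrable ((T^[n] ⁻¹' V).indicator (1:X→ℝ)) μ := by
    rw [integrable_indicator_iff (aux_meas hT hV n)]
    exact integrableOn_const (C := (1:ℝ)) (measure_ne_top μ _) (by simp)
  have intmn : Integrable (fun x => (T^[m] ⁻¹' V).indicator (1:X→ℝ) x * (T^[n] ⁻¹' V).indicator (1:X→ℝ) x) μ := by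
    have : (fun x => (T^[m] ⁻¹' V).indicator (1:X→ℝ) x * (T^[n] ⁻¹' V).indicator (1:X→ℝ) x)
        = (T^[m] ⁻¹' V ∩ T^[n] ⁻¹' V).indicator (1:X→ℝ) := by
      rw [Set.inter_indicator_one]; rfl
    rw [this, integrable_indicator_iff ((aux_meas hT hV m).inter (aux_meas hT hV n))]
    exact integrableOn_const (C := (1:ℝ)) (measure_ne_top μ _) (by simp)
  have expand : ∀ x, gfun T V μ m x * gfun T V μ n x
      = (T^[m] ⁻¹' V).indicator (1:X→ℝ) x * (T^[n] ⁻¹' V).indicator (1:X→ℝ) x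
        - c * (T^[m] ⁻¹' V).indicator (1:X→ℝ) x - c * (T^[n] ⁻¹' V).indicator (1:X→ℝ) x + c * c := by
    intro x; unfold gfun; ring
  simp only [expand]
  rw [integral_add, integral_sub, integral_sub, integral_const_mul, integral_const_mul,
    him m, him n, hprod, integral_const]
  · simp; try ring
  · exact intmn
  · exact intm.const_mul c
  · exact (intmn.sub (intm.const_mul c))
  · exact intn.const_mul c
  · exact ((intmn.sub (intm.const_mul c)).sub (intn.const_mul c))
  · exact integrable_const _

lemma sq_eq_double_sum (A : Set ℕ) (N : ℕ) (x : X) :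
    ((∑ n ∈ (Finset.Icc 1 N).filter (· ∈ A), gfun T V μ n x) / N)^2
      = (∑ m ∈ (Finset.Icc 1 N).filter (· ∈ A), ∑ n ∈ (Finset.Icc 1 N).filter (· ∈ A),
          gfun T V μ m x * gfun T V μ n x) / (N^2 : ℝ) := by
  rw [div_pow, sq, Finset.sum_mul_sum]

lemma SN_sq_int (hT : MeasurePreserving T μ μ) (hV : MeasurableSet V) (A : Set ℕ) (N : ℕ) :
    Integrable (fun x => ((∑ n ∈ (Finset.Icc 1 N).filter (· ∈ A), gfun T V μ n x) / N)^2) μ := by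
  have h : Integrable (fun x => ∑ m ∈ (Finset.Icc 1 N).filter (· ∈ A),
      ∑ n ∈ (Finset.Icc 1 N).filter (· ∈ A), gfun T V μ m x * gfun T V μ n x) μ :=
    integrable_finset_sum _ (fun m _ => integrable_finset_sum _ (fun n _ => gfun_int hT hV m n))
  exact (h.div_const _).congr (by filter_upwards with x using (sq_eq_double_sum A N x).symm)

lemma second_moment (hT : MeasurePreserving T μ μ) (hV : MeasurableSet V) (A : Set ℕ) (N : ℕ) :
    ∫ x, ((∑ n ∈ (Finset.Icc 1 N).filter (· ∈ A), gfun T V μ n x) / N)^2 ∂μ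
      ≤ 2 * ((∑ k ∈ Finset.range N,
          |(μ (V ∩ T^[k] ⁻¹' V)).toReal - (μ V).toReal * (μ V).toReal|) / N) := by
  rcases Nat.eq_zero_or_pos N with rfl | hN
  · simp
  set I := (Finset.Icc 1 N).filter (· ∈ A) with hI
  have hIsub : I ⊆ Finset.Icc 1 N := Finset.filter_subset _ _
  set aab : ℕ → ℝ := fun k => |(μ (V ∩ T^[k] ⁻¹' V)).toReal - (μ V).toReal * (μ V).toReal|
    with haab
  have key : ∫ x, ((∑ n ∈ I, gfun T V μ n x) / N)^2 ∂μ
      = (∑ m ∈ I, ∑ n ∈ I,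
          ((μ (V ∩ T^[Nat.dist m n] ⁻¹' V)).toReal - (μ V).toReal * (μ V).toReal)) / (N^2 : ℝ) := by
    rw [show (fun x => ((∑ n ∈ I, gfun T V μ n x) / N)^2)
        = fun x => (∑ m ∈ I, ∑ n ∈ I, gfun T V μ m x * gfun T V μ n x) / (N^2 : ℝ) from
        funext (sq_eq_double_sum A N)]
    rw [integral_div, integral_finset_sum _ (fun m _ =>
      integrable_finset_sum _ (fun n _ => gfun_int hT hV m n))]
    congr 1
    refine Finset.sum_congr rfl (fun m _ => ?_)
    rw [integral_finset_sum _ (fun n _ => gfun_int hT hV m n)]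
    exact Finset.sum_congr rfl (fun n _ => integral_gg hT hV m n)
  rw [key]
  have bound : ∑ m ∈ I, ∑ n ∈ I,
      ((μ (V ∩ T^[Nat.dist m n] ⁻¹' V)).toReal - (μ V).toReal * (μ V).toReal)
      ≤ (N : ℝ) * (2 * ∑ k ∈ Finset.range N, aab k) := by
    calc ∑ m ∈ I, ∑ n ∈ I, ((μ (V ∩ T^[Nat.dist m n] ⁻¹' V)).toReal - (μ V).toReal * (μ V).toReal)
        ≤ ∑ m ∈ I, ∑ n ∈ I, aab (Nat.dist m n) :=
          Finset.sum_le_sum (fun m _ => Finset.sum_le_sum (fun n _ => le_abs_self _))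
      _ ≤ ∑ m ∈ I, ∑ n ∈ Finset.Icc 1 N, aab (Nat.dist m n) :=
          Finset.sum_le_sum (fun m _ =>
            Finset.sum_le_sum_of_subset_of_nonneg hIsub (fun n _ _ => abs_nonneg _))
      _ ≤ ∑ m ∈ Finset.Icc 1 N, ∑ n ∈ Finset.Icc 1 N, aab (Nat.dist m n) :=
          Finset.sum_le_sum_of_subset_of_nonneg hIsub
            (fun m _ _ => Finset.sum_nonneg (fun n _ => abs_nonneg _))
      _ ≤ ∑ m ∈ Finset.Icc 1 N, (2 * ∑ k ∈ Finset.range N, aab k) :=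
          Finset.sum_le_sum (fun m hm => aux_count (b := aab) (fun k => abs_nonneg _) hm)
      _ = (N : ℝ) * (2 * ∑ k ∈ Finset.range N, aab k) := by
          rw [Finset.sum_const, Nat.card_Icc]; simp [nsmul_eq_mul]
  have hN' : (0:ℝ) < N := by exact_mod_cast hN
  calc (∑ m ∈ I, ∑ n ∈ I,
      ((μ (V ∩ T^[Nat.dist m n] ⁻¹' V)).toReal - (μ V).toReal * (μ V).toReal)) / (N^2:ℝ)
      ≤ ((N:ℝ) * (2 * ∑ k ∈ Finset.range N, aab k)) / (N^2:ℝ) := by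
        gcongr
    _ = 2 * ((∑ k ∈ Finset.range N, aab k) / N) := by
        field_simp

lemma card_eq (A : Set ℕ) (x : X) (N : ℕ) :
    (((Finset.Icc 1 N).filter (· ∈ A ∩ {n : ℕ | T^[n] x ∈ V})).card : ℝ)
      = ∑ n ∈ (Finset.Icc 1 N).filter (· ∈ A), (T^[n] ⁻¹' V).indicator (1 : X → ℝ) x := by
  have hset : (Finset.Icc 1 N).filter (· ∈ A ∩ {n : ℕ | T^[n] x ∈ V})
      = ((Finset.Icc 1 N).filter (· ∈ A)).filter (fun n => T^[n] x ∈ V) := by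
    rw [Finset.filter_filter]
    apply Finset.filter_congr; intro n _
    simp [Set.mem_inter_iff]
  rw [hset, Finset.card_filter]
  push_cast
  apply Finset.sum_congr rfl; intro n _
  by_cases h : T^[n] x ∈ V <;> simp [h, Set.indicator_apply, Set.mem_preimage]

end UDaux

/-- If `T` is a weakly mixing measure-preserving transformation of a probability space,
`A ⊆ ℕ` has positive upper density and `V` is measurable with `μ(V) > 0`, then for
`μ`-almost every `x`, the set `A ∩ {n : Tⁿx ∈ V}` has positive upper density. -/
theorem upperDensity_visits_pos_ae
    {X : Type*} [MeasurableSpace X] (μ : Measure X) [IsProbabilityMeasure μ]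
    (T : X → X) (hT : MeasurePreserving T μ μ) (hwm : WeaklyMixingWrt T μ)
    (A : Set ℕ) (hA : 0 < upperDensity A)
    (V : Set X) (hV : MeasurableSet V) (hVpos : 0 < μ V) :
    ∀ᵐ x ∂μ, 0 < upperDensity (A ∩ {n : ℕ | T^[n] x ∈ V}) := by
  set c : ℝ := (μ V).toReal with hc
  have hc0 : 0 < c := ENNReal.toReal_pos hVpos.ne' (measure_ne_top μ V)
  set d : ℝ := upperDensity A with hd
  set S : ℕ → X → ℝ :=
    fun N x => (∑ n ∈ (Finset.Icc 1 N).filter (· ∈ A), gfun T V μ n x) / N with hSdef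
  set cN : ℕ → ℝ := fun N => (((Finset.Icc 1 N).filter (· ∈ A)).card : ℝ) / N with hcN
  -- the second moment tends to 0
  have hnn : ∀ N, 0 ≤ ∫ x, (S N x)^2 ∂μ := fun N => integral_nonneg (fun x => sq_nonneg _)
  have htend : Tendsto (fun N => ∫ x, (S N x)^2 ∂μ) atTop (𝓝 0) := by
    have hwmV := hwm V V hV hV
    have h2 : Tendsto (fun N : ℕ => 2 * ((∑ k ∈ Finset.range N,
        |(μ (V ∩ T^[k] ⁻¹' V)).toReal - (μ V).toReal * (μ V).toReal|) / N)) atTop (𝓝 0) := by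
      have := hwmV.const_mul (2:ℝ)
      simpa using this
    exact squeeze_zero hnn (fun N => second_moment hT hV A N) h2
  -- frequently the density of A∩[1,N] exceeds d/2
  have hb0 : ∀ N, 0 ≤ cN N := fun N => div_nonneg (Nat.cast_nonneg _) (Nat.cast_nonneg _)
  have hb1 : ∀ N, cN N ≤ 1 := by
    intro N
    rcases Nat.eq_zero_or_pos N with rfl | hN
    · simp [hcN]
    · have hcard : (((Finset.Icc 1 N).filter (· ∈ A)).card : ℝ) ≤ N := by
        have := Finset.card_filter_le (Finset.Icc 1 N) (· ∈ A)
        have h2 : (Finset.Icc 1 N).card = N := by rw [Nat.card_Icc]; omega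
        exact_mod_cast h2 ▸ this
      rw [hcN, div_le_one (by exact_mod_cast hN)]
      exact hcard
  have hbdd : Filter.IsBoundedUnder (· ≥ ·) Filter.atTop cN :=
    ⟨0, Filter.eventually_map.2 (Filter.Eventually.of_forall hb0)⟩
  have hfreq : ∃ᶠ N in atTop, d / 2 < cN N := by
    apply frequently_lt_of_lt_limsup hbdd.isCoboundedUnder_le
    rw [hd]; exact half_lt_self hA
  -- choose a subsequence
  have hchoice : ∀ j : ℕ, ∃ N : ℕ, j ≤ N ∧ d / 2 < cN N ∧ ∫ x, (S N x)^2 ∂μ ≤ (1/2)^j := by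
    intro j
    have hev : ∀ᶠ N in atTop, j ≤ N ∧ ∫ x, (S N x)^2 ∂μ ≤ (1/2)^j :=
      (eventually_ge_atTop j).and (htend.eventually (eventually_le_nhds (by positivity)))
    obtain ⟨N, h1, h2, h3⟩ := (hfreq.and_eventually hev).exists
    exact ⟨N, h2, h1, h3⟩
  choose Ns hNs1 hNs2 hNs3 using hchoice
  have hNs_tend : Tendsto Ns atTop atTop := tendsto_atTop_mono hNs1 tendsto_id
  -- Borel–Cantelli
  have hSmeas : ∀ N, Measurable (S N) := by
    intro N
    exact (Finset.measurable_sum _ (fun n _ => gfun_meas hT hV n)).div_const _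
  set F : ℕ → X → ENNReal := fun j x => ENNReal.ofReal ((S (Ns j) x)^2) with hF
  have hFmeas : ∀ j, Measurable (F j) := fun j =>
    ENNReal.measurable_ofReal.comp ((hSmeas (Ns j)).pow_const 2)
  have hFint : ∀ j, ∫⁻ x, F j x ∂μ = ENNReal.ofReal (∫ x, (S (Ns j) x)^2 ∂μ) := by
    intro j
    rw [ofReal_integral_eq_lintegral_ofReal (SN_sq_int hT hV A (Ns j))
      (Filter.Eventually.of_forall (fun x => sq_nonneg _))]
  have htsum_ne_top : ∑' j, ∫⁻ x, F j x ∂μ ≠ ⊤ := by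
    have hle : ∑' j, ∫⁻ x, F j x ∂μ ≤ ∑' j : ℕ, ENNReal.ofReal ((1/2 : ℝ)^j) := by
      apply ENNReal.tsum_le_tsum
      intro j
      rw [hFint j]
      exact ENNReal.ofReal_le_ofReal (hNs3 j)
    have hsum : ∑' j : ℕ, ENNReal.ofReal ((1/2 : ℝ)^j) = ENNReal.ofReal (∑' j : ℕ, (1/2:ℝ)^j) :=
      (ENNReal.ofReal_tsum_of_nonneg (fun j => by positivity)
        (summable_geometric_of_lt_one (by norm_num) (by norm_num))).symm
    refine ne_top_of_le_ne_top ?_ hle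
    rw [hsum]
    exact ENNReal.ofReal_ne_top
  have haelt : ∀ᵐ x ∂μ, ∑' j, F j x < ⊤ := by
    apply ae_lt_top' (Measurable.ennreal_tsum (fun j => hFmeas j)).aemeasurable
    rw [lintegral_tsum (fun j => (hFmeas j).aemeasurable)]
    exact htsum_ne_top
  filter_upwards [haelt] with x hx
  -- from summability, S (Ns j) x → 0
  have hsummable : Summable (fun j => (S (Ns j) x)^2) := by
    have := ENNReal.summable_toReal hx.ne
    convert this using 2 with j
    rw [hF]
    simp [ENNReal.toReal_ofReal (sq_nonneg _)]
  have hSto0 : Tendsto (fun j => (S (Ns j) x)^2) atTop (𝓝 0) := hsummable.tendsto_atTop_zero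
  -- the quantity whose limsup is the upper density
  set e : ℕ → ℝ :=
    fun N => (((Finset.Icc 1 N).filter (· ∈ A ∩ {n : ℕ | T^[n] x ∈ V})).card : ℝ) / N with he
  have hekey : ∀ N, e N = S N x + c * cN N := by
    intro N
    rw [he]
    simp only
    rw [card_eq A x N, hSdef, hcN]
    simp only
    have : ∑ n ∈ (Finset.Icc 1 N).filter (· ∈ A), (T^[n] ⁻¹' V).indicator (1 : X → ℝ) x
        = (∑ n ∈ (Finset.Icc 1 N).filter (· ∈ A), gfun T V μ n x)
          + (((Finset.Icc 1 N).filter (· ∈ A)).card : ℝ) * c := by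
      rw [Finset.sum_congr rfl (fun n _ => show (T^[n] ⁻¹' V).indicator (1 : X → ℝ) x
          = gfun T V μ n x + c by unfold gfun; ring), Finset.sum_add_distrib]
      simp [Finset.sum_const, nsmul_eq_mul]
    rw [this, add_div]
    ring
  have heub : ∀ N, e N ≤ 1 := by
    intro N
    rcases Nat.eq_zero_or_pos N with rfl | hN
    · simp [he]
    · have hcard : (((Finset.Icc 1 N).filter (· ∈ A ∩ {n : ℕ | T^[n] x ∈ V})).card : ℝ) ≤ N := by
        have := Finset.card_filter_le (Finset.Icc 1 N) (· ∈ A ∩ {n : ℕ | T^[n] x ∈ V})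
        have h2 : (Finset.Icc 1 N).card = N := by rw [Nat.card_Icc]; omega
        exact_mod_cast h2 ▸ this
      rw [he]
      simp only
      rw [div_le_one (by exact_mod_cast hN)]
      exact hcard
  -- eventually along the subsequence, e (Ns j) ≥ c*d/4
  have hd0 : 0 < d := hA
  have heps : (0:ℝ) < c * d / 4 := by positivity
  have hev : ∀ᶠ j in atTop, c * d / 4 ≤ e (Ns j) := by
    have hsq : ∀ᶠ j in atTop, (S (Ns j) x)^2 < (c * d / 4)^2 :=
      hSto0.eventually (eventually_lt_nhds (by positivity))
    filter_upwards [hsq] with j hj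
    have hlow : -(c * d / 4) < S (Ns j) x := by nlinarith [sq_nonneg (S (Ns j) x + c * d / 4)]
    have := hNs2 j
    have : c * cN (Ns j) ≥ c * (d / 2) := by
      apply mul_le_mul_of_nonneg_left (le_of_lt (hNs2 j)) hc0.le
    rw [hekey (Ns j)]
    nlinarith [hNs2 j, hc0]
  have hfreq2 : ∃ᶠ N in atTop, c * d / 4 ≤ e N := hNs_tend.frequently (hev.frequently)
  -- conclude
  have hbdd2 : Filter.IsBoundedUnder (· ≤ ·) Filter.atTop e :=
    ⟨1, Filter.eventually_map.2 (Filter.Eventually.of_forall heub)⟩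
  have hud : upperDensity (A ∩ {n : ℕ | T^[n] x ∈ V}) = Filter.atTop.limsup e := by
    rw [he]; unfold upperDensity
    congr 1
    funext N
    congr 1
    norm_cast
    congr 1
    exact Finset.filter_congr_decidable _ _ _
  have hfinal : c * d / 4 ≤ upperDensity (A ∩ {n : ℕ | T^[n] x ∈ V}) := by
    rw [hud]
    exact le_limsup_of_frequently_le hfreq2 hbdd2
  linarith
end

section
/- Let X be a Banach space admitting a Schauder basis (e_k)_{k≥0}, and let T be a bounded operator on X. For K ≥ 1, let π_K denote the canonical basis projection onto span(e_k : 0 ≤ k ≤ K−1). Assume there exist increasing sequences of positive integers (K_n)_{n≥1} and (J_n)_{n≥1} such that for every n: (a) T^{J_n} π_{K_n} = π_{K_n}, and (b) ‖π_{K_n} T^j (I − π_{K_n}) x‖ ≤ ‖(I − π_{K_n}) x‖ for all x ∈ X and all 0 ≤ j ≤ (n+1)^{2^{J_n}} J_n. Then there exists a set A ⊆ ℕ with positive lower density such that T is not frequently hypercyclic along A (and thus T is not hereditarily frequently hypercyclic). -/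
open Filter Topology Set
open scoped Classical

lemma mod_helper (Jn u ρ : ℕ) (hu : u < Jn) (hρ : ρ < Jn) :
    (u + (ρ + (Jn - u)) % Jn) % Jn = ρ := by
  have h2 : (u + (ρ + (Jn - u)) % Jn) % Jn = (u + (ρ + (Jn - u))) % Jn := by
    conv_rhs => rw [Nat.add_mod]
    rw [Nat.add_mod u ((ρ + (Jn - u)) % Jn), Nat.mod_mod_of_dvd _ dvd_rfl]
  rw [h2]
  have h3 : u + (ρ + (Jn - u)) = ρ + Jn := by omega
  rw [h3, Nat.add_mod_right, Nat.mod_eq_of_lt hρ]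

/-- Counting lower bound: an interval `(c, c+t*J]` contains at least `t * |E|`
elements whose residue mod `J` lies in `E`. -/
lemma count_res_lb (Jn : ℕ) (hJ : 0 < Jn) (E : Finset ℕ) (hE : E ⊆ Finset.range Jn)
    (c t : ℕ) :
    t * E.card ≤ ((Finset.Ioc c (c + t * Jn)).filter (fun m => m % Jn ∈ E)).card := by
  classical
  set u := (c + 1) % Jn with hu
  have hult : u < Jn := Nat.mod_lt _ hJ
  set ψ : ℕ × ℕ → ℕ := fun p => c + 1 + (p.2 + (Jn - u)) % Jn + p.1 * Jn with hψ
  have key : ∀ i ρ : ℕ, ρ < Jn → ψ (i, ρ) % Jn = ρ := by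
    intro i ρ hρ
    have h1 : ψ (i, ρ) % Jn = (c + 1 + (ρ + (Jn - u)) % Jn) % Jn := by
      simp [hψ, Nat.add_mul_mod_self_right]
    rw [h1, Nat.add_mod (c+1), ← hu, Nat.mod_mod_of_dvd _ dvd_rfl]
    exact mod_helper Jn u ρ hult hρ
  have hcard : ((Finset.range t) ×ˢ E).card = t * E.card := by
    simp [Finset.card_product]
  rw [← hcard]
  apply Finset.card_le_card_of_injOn ψ
  · intro p hp
    simp only [Finset.mem_coe, Finset.mem_product, Finset.mem_range] at hp
    obtain ⟨hp1, hp2⟩ := hp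
    have hρ : p.2 < Jn := Finset.mem_range.1 (hE hp2)
    have hψp : ψ p = c + 1 + (p.2 + (Jn - u)) % Jn + p.1 * Jn := by
      rw [hψ]
    have hw : (p.2 + (Jn - u)) % Jn < Jn := Nat.mod_lt _ hJ
    have hmul : p.1 * Jn + Jn ≤ t * Jn := by
      calc p.1 * Jn + Jn = (p.1 + 1) * Jn := by ring
      _ ≤ t * Jn := Nat.mul_le_mul_right _ hp1
    simp only [Finset.mem_coe, Finset.mem_filter, Finset.mem_Ioc]
    refine ⟨⟨by omega, by omega⟩, ?_⟩
    · rw [show ψ p = ψ (p.1, p.2) by rfl, key p.1 p.2 hρ]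
      exact hp2
  · intro p hp q hq hpq
    simp only [Finset.mem_coe, Finset.mem_product, Finset.mem_range] at hp hq
    have hρp : p.2 < Jn := Finset.mem_range.1 (hE hp.2)
    have hρq : q.2 < Jn := Finset.mem_range.1 (hE hq.2)
    have h2 : p.2 = q.2 := by
      have hk := key p.1 p.2 hρp
      have hk2 := key q.1 q.2 hρq
      rw [show ψ p = ψ (p.1, p.2) from rfl, show ψ q = ψ (q.1, q.2) from rfl] at hpq
      rw [hpq] at hk; rw [hk] at hk2; exact hk2
    have h1 : p.1 = q.1 := by
      simp only [hψ, h2] at hpq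
      have : p.1 * Jn = q.1 * Jn := by omega
      exact Nat.eq_of_mul_eq_mul_right hJ this
    exact Prod.ext h1 h2

lemma choose_half_le (J : ℕ) (hJ : 1 ≤ J) :
    Nat.choose J ((J + 1) / 2) ≤ 2 ^ (J - 1) := by
  obtain ⟨m, rfl⟩ : ∃ m, J = m + 1 := ⟨J - 1, by omega⟩
  rcases Nat.eq_zero_or_pos m with hm | hm
  · subst hm; decide
  obtain ⟨k, hk⟩ : ∃ k, (m + 1 + 1) / 2 = k + 1 := ⟨(m + 2) / 2 - 1, by omega⟩
  rw [hk, Nat.choose_succ_succ']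
  have hkm : k + 1 ≤ m := by omega
  have hsub : ({k, k + 1} : Finset ℕ) ⊆ Finset.range (m + 1) := by
    intro i hi
    simp only [Finset.mem_insert, Finset.mem_singleton] at hi
    rcases hi with rfl | rfl <;> simp [Finset.mem_range] <;> omega
  have hsum : Nat.choose m k + Nat.choose m (k + 1)
      ≤ ∑ i ∈ Finset.range (m + 1), Nat.choose m i := by
    calc Nat.choose m k + Nat.choose m (k + 1)
        = ∑ i ∈ ({k, k + 1} : Finset ℕ), Nat.choose m i := by
          rw [Finset.sum_insert (by simp), Finset.sum_singleton]
      _ ≤ _ := Finset.sum_le_sum_of_subset hsub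
  rw [Nat.sum_range_choose] at hsum
  simpa using hsum
open Filter Topology Set
open scoped Classical



/-- Scale points: `Qf J n s = J n * (n+1)^s`. -/
def Qf (J : ℕ → ℕ) (n s : ℕ) : ℕ := J n * (n + 1) ^ s

/-- The residue set used in segment `s` of window `n`: an enumeration of all
subsets of `{0,…,J n − 1}` of cardinality `⌈J n/2⌉`. -/
noncomputable def EsetF (J : ℕ → ℕ) (n s : ℕ) : Finset ℕ :=
  if h : 2 ^ (J n - 1) ≤ s ∧
      s - 2 ^ (J n - 1) < ((Finset.range (J n)).powersetCard ((J n + 1) / 2)).card then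
    (((Finset.range (J n)).powersetCard ((J n + 1) / 2)).equivFin.symm
      ⟨s - 2 ^ (J n - 1), h.2⟩ : ((Finset.range (J n)).powersetCard ((J n + 1) / 2) : Finset (Finset ℕ))).val
  else Finset.range ((J n + 1) / 2)

/-- The set `A` along which `T` fails to be frequently hypercyclic. -/
def AsetF (J : ℕ → ℕ) : Set ℕ :=
  {m | ∀ n s, 8 ≤ n → 2 ^ (J n - 1) ≤ s → s < 2 ^ (J n) →
    Qf J n s < m → m ≤ Qf J n (s + 1) → m % J n ∈ EsetF J n s}

lemma Eset_subset (J : ℕ → ℕ) (n s : ℕ) (hJ : 1 ≤ J n) :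
    EsetF J n s ⊆ Finset.range (J n) := by
  unfold EsetF
  split_ifs with h
  · have hmem := (((Finset.range (J n)).powersetCard ((J n + 1) / 2)).equivFin.symm
      ⟨s - 2 ^ (J n - 1), h.2⟩).property
    exact (Finset.mem_powersetCard.1 hmem).1
  · intro i hi
    simp only [Finset.mem_range] at hi ⊢
    omega

lemma Eset_card (J : ℕ → ℕ) (n s : ℕ) :
    (EsetF J n s).card = (J n + 1) / 2 := by
  unfold EsetF
  split_ifs with h
  · have hmem := (((Finset.range (J n)).powersetCard ((J n + 1) / 2)).equivFin.symm
      ⟨s - 2 ^ (J n - 1), h.2⟩).property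
    exact (Finset.mem_powersetCard.1 hmem).2
  · simp

lemma Eset_cover (J : ℕ → ℕ) (n : ℕ) (hJ : 1 ≤ J n) (S : Finset ℕ)
    (hS : S ⊆ Finset.range (J n)) (hcard : S.card = (J n + 1) / 2) :
    ∃ s, 2 ^ (J n - 1) ≤ s ∧ s < 2 ^ (J n) ∧ EsetF J n s = S := by
  set PS := (Finset.range (J n)).powersetCard ((J n + 1) / 2) with hPS
  have hSmem : S ∈ PS := Finset.mem_powersetCard.2 ⟨hS, hcard⟩
  set idx := (PS.equivFin ⟨S, hSmem⟩ : Fin PS.card) with hidx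
  refine ⟨2 ^ (J n - 1) + idx.val, le_add_of_nonneg_right (Nat.zero_le _), ?_, ?_⟩
  · have h1 : PS.card ≤ 2 ^ (J n - 1) := by
      rw [hPS, Finset.card_powersetCard, Finset.card_range]
      exact choose_half_le (J n) hJ
    have h2 : 2 ^ (J n) = 2 ^ (J n - 1) + 2 ^ (J n - 1) := by
      obtain ⟨j0, hj0⟩ : ∃ j0, J n = j0 + 1 := ⟨J n - 1, by omega⟩
      rw [hj0]
      simp [pow_succ, Nat.add_sub_cancel]
      omega
    have := idx.isLt
    omega
  · have harg : 2 ^ (J n - 1) ≤ 2 ^ (J n - 1) + idx.val ∧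
        2 ^ (J n - 1) + idx.val - 2 ^ (J n - 1) < PS.card := by
      constructor
      · omega
      · simpa using idx.isLt
    unfold EsetF
    rw [dif_pos]
    · show (PS.equivFin.symm _ : PS).val = S
      have hfin : (⟨2 ^ (J n - 1) + idx.val - 2 ^ (J n - 1), harg.2⟩ : Fin PS.card) = idx := by
        apply Fin.ext
        simp
      rw [hfin, hidx, Equiv.symm_apply_apply]
    · exact harg

section Windows

variable (J : ℕ → ℕ)

/-- Window start / end. -/
def Bw (n : ℕ) : ℕ := Qf J n (2 ^ (J n - 1))
def Lw (n : ℕ) : ℕ := Qf J n (2 ^ (J n))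

/-- Prefix counting function of `AsetF J`. -/
noncomputable def Acnt (N : ℕ) : ℕ := ((Finset.Icc 1 N).filter (· ∈ AsetF J)).card

variable (hJmono : StrictMono J) (hJ1 : 1 ≤ J 1)
include hJmono hJ1

lemma Jge : ∀ n, 1 ≤ n → n ≤ J n := by
  intro n hn
  induction n with
  | zero => omega
  | succ k ih =>
    rcases Nat.eq_zero_or_pos k with hk | hk
    · subst hk; simpa using hJ1
    · have h1 := hJmono (show k < k+1 by omega)
      have h2 := ih hk
      omega

lemma Jpos {n : ℕ} (hn : 1 ≤ n) : 1 ≤ J n := le_trans hn (Jge J hJmono hJ1 n hn)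

lemma Qpos {n : ℕ} (hn : 1 ≤ n) (s : ℕ) : 0 < Qf J n s := by
  have := Jpos J hJmono hJ1 hn
  have : 0 < (n + 1) ^ s := pow_pos (by omega : 0 < n+1) s
  unfold Qf
  positivity

omit hJmono hJ1 in
lemma JleQ {n : ℕ} (s : ℕ) : J n ≤ Qf J n s := by
  have h : 0 < (n + 1) ^ s := pow_pos (by omega : 0 < n+1) s
  unfold Qf
  calc J n = J n * 1 := by ring
  _ ≤ J n * (n + 1) ^ s := Nat.mul_le_mul_left _ h

omit hJmono hJ1 in
lemma Qle {n : ℕ} {s s' : ℕ} (h : s ≤ s') : Qf J n s ≤ Qf J n s' :=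
  Nat.mul_le_mul_left _ (Nat.pow_le_pow_right (by omega) h)

lemma Qlt {n : ℕ} (hn : 1 ≤ n) {s s' : ℕ} (h : s < s') : Qf J n s < Qf J n s' := by
  have hJ := Jpos J hJmono hJ1 hn
  exact Nat.mul_lt_mul_of_le_of_lt (le_refl _) (Nat.pow_lt_pow_right (by omega) h) hJ

omit hJmono hJ1 in
lemma Qsucc (n s : ℕ) : Qf J n (s + 1) = Qf J n s + n * (n + 1) ^ s * J n := by
  unfold Qf
  rw [pow_succ]
  ring

lemma LleB (n : ℕ) (hn : 1 ≤ n) : Lw J n ≤ Bw J (n + 1) := by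
  unfold Lw Bw Qf
  have h1 : J n ≤ J (n + 1) := le_of_lt (hJmono (show n < n+1 by omega))
  have h2 : (n + 1) ^ 2 ^ J n ≤ (n + 1 + 1) ^ 2 ^ (J (n + 1) - 1) := by
    have he : 2 ^ (J n) ≤ 2 ^ (J (n + 1) - 1) := by
      apply Nat.pow_le_pow_right (by omega)
      have := hJmono (show n < n+1 by omega)
      omega
    calc (n + 1) ^ 2 ^ J n ≤ (n + 1 + 1) ^ 2 ^ J n := Nat.pow_le_pow_left (by omega) _
    _ ≤ (n + 1 + 1) ^ 2 ^ (J (n + 1) - 1) := Nat.pow_le_pow_right (by omega) he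
  exact Nat.mul_le_mul h1 h2

lemma BltL (n : ℕ) (hn : 1 ≤ n) : Bw J n < Lw J n := by
  unfold Bw Lw
  apply Qlt J hJmono hJ1 hn
  have hJ := Jpos J hJmono hJ1 hn
  have h2 : 2 ^ (J n) = 2 ^ (J n - 1) * 2 := by
    obtain ⟨j0, hj0⟩ : ∃ j0, J n = j0 + 1 := ⟨J n - 1, by omega⟩
    rw [hj0, pow_succ]
    simp
  have := pow_pos (show 0 < 2 by omega) (J n - 1)
  omega

lemma chainLB : ∀ a b, 1 ≤ a → a < b → Lw J a ≤ Bw J b := by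
  intro a b ha hab
  induction b with
  | zero => omega
  | succ k ih =>
    rcases Nat.lt_or_ge a k with h | h
    · calc Lw J a ≤ Bw J k := ih h
      _ ≤ Lw J k := le_of_lt (BltL J hJmono hJ1 k (by omega))
      _ ≤ Bw J (k + 1) := LleB J hJmono hJ1 k (by omega)
    · have : a = k := by omega
      subst this
      exact LleB J hJmono hJ1 a ha


lemma mem_A_seg_iff {n s m : ℕ} (hn : 8 ≤ n) (hs1 : 2 ^ (J n - 1) ≤ s) (hs2 : s < 2 ^ (J n))
    (hm1 : Qf J n s < m) (hm2 : m ≤ Qf J n (s + 1)) :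
    m ∈ AsetF J ↔ m % J n ∈ EsetF J n s := by
  constructor
  · intro hA
    exact hA n s hn hs1 hs2 hm1 hm2
  · intro hres
    intro n' s' hn' hs1' hs2' hm1' hm2'
    have hkey : n' = n ∧ s' = s := by
      rcases Nat.lt_trichotomy n' n with h | h | h
      · exfalso
        have h1 : Qf J n' (s' + 1) ≤ Lw J n' := Qle J (Nat.succ_le_of_lt hs2')
        have h2 : Lw J n' ≤ Bw J n := chainLB J hJmono hJ1 n' n (by omega) h
        have h3 : Bw J n ≤ Qf J n s := Qle J hs1
        omega
      · refine ⟨h, ?_⟩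
        subst h
        rcases Nat.lt_trichotomy s' s with h' | h' | h'
        · exfalso
          have : Qf J n' (s' + 1) ≤ Qf J n' s := Qle J h'
          omega
        · exact h'
        · exfalso
          have : Qf J n' (s + 1) ≤ Qf J n' s' := Qle J h'
          omega
      · exfalso
        have h1 : Qf J n (s + 1) ≤ Lw J n := Qle J hs2
        have h2 : Lw J n ≤ Bw J n' := chainLB J hJmono hJ1 n n' (by omega) h
        have h3 : Bw J n' ≤ Qf J n' s' := Qle J hs1'
        omega
    obtain ⟨rfl, rfl⟩ := hkey
    exact hres

lemma mem_A_low {m : ℕ} (hm : m ≤ Bw J 8) : m ∈ AsetF J := by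
  intro n s hn hs1 hs2 hm1 hm2
  exfalso
  have h1 : Bw J 8 ≤ Bw J n := by
    rcases Nat.eq_or_lt_of_le hn with h | h
    · rw [← h]
    · calc Bw J 8 ≤ Lw J 8 := le_of_lt (BltL J hJmono hJ1 8 (by omega))
      _ ≤ Bw J n := chainLB J hJmono hJ1 8 n (by omega) h
  have h2 : Bw J n ≤ Qf J n s := Qle J hs1
  omega

lemma mem_A_gap {n m : ℕ} (hn : 8 ≤ n) (h1 : Lw J n < m) (h2 : m ≤ Bw J (n + 1)) :
    m ∈ AsetF J := by
  intro n' s' hn' hs1' hs2' hm1' hm2'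
  exfalso
  rcases Nat.lt_or_ge n' (n + 1) with h | h
  · -- n' ≤ n : segment ends before L n
    have ha : Qf J n' (s' + 1) ≤ Lw J n' := Qle J (Nat.succ_le_of_lt hs2')
    have hb : Lw J n' ≤ Lw J n := by
      rcases Nat.eq_or_lt_of_le (show n' ≤ n by omega) with hh | hh
      · rw [hh]
      · calc Lw J n' ≤ Bw J n := chainLB J hJmono hJ1 n' n (by omega) hh
        _ ≤ Lw J n := le_of_lt (BltL J hJmono hJ1 n (by omega))
    omega
  · have ha : Bw J (n + 1) ≤ Bw J n' := by
      rcases Nat.eq_or_lt_of_le h with hh | hh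
      · rw [hh]
      · calc Bw J (n + 1) ≤ Lw J (n + 1) := le_of_lt (BltL J hJmono hJ1 (n+1) (by omega))
        _ ≤ Bw J n' := chainLB J hJmono hJ1 (n+1) n' (by omega) hh
    have hb : Bw J n' ≤ Qf J n' s' := Qle J hs1'
    omega

omit hJmono hJ1 in
lemma Acnt_mono {a b : ℕ} (h : a ≤ b) : Acnt J a ≤ Acnt J b := by
  apply Finset.card_le_card
  apply Finset.filter_subset_filter
  exact Finset.Icc_subset_Icc (le_refl _) h

omit hJmono hJ1 in
lemma Acnt_split {a b : ℕ} (h : a ≤ b) :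
    Acnt J b = Acnt J a + ((Finset.Ioc a b).filter (· ∈ AsetF J)).card := by
  unfold Acnt
  have hd : Disjoint (Finset.Icc 1 a) (Finset.Ioc a b) := by
    rw [Finset.disjoint_left]
    intro m h1 h2
    simp only [Finset.mem_Icc] at h1
    simp only [Finset.mem_Ioc] at h2
    omega
  have hu : Finset.Icc 1 b = Finset.Icc 1 a ∪ Finset.Ioc a b := by
    apply Finset.ext
    intro m
    simp only [Finset.mem_union, Finset.mem_Icc, Finset.mem_Ioc]
    omega
  rw [hu, Finset.filter_union,
    Finset.card_union_of_disjoint (Finset.disjoint_filter_filter hd)]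

omit hJmono hJ1 in
lemma Acnt_gap {a b : ℕ} (h : a ≤ b) (hall : ∀ m, a < m → m ≤ b → m ∈ AsetF J) :
    Acnt J b = Acnt J a + (b - a) := by
  rw [Acnt_split J h]
  congr 1
  rw [Finset.filter_true_of_mem, Nat.card_Ioc]
  intro m hm
  simp only [Finset.mem_Ioc] at hm
  exact hall m hm.1 hm.2

lemma Acnt_seg {n s c0 t : ℕ} (hn : 8 ≤ n) (hs1 : 2 ^ (J n - 1) ≤ s) (hs2 : s < 2 ^ (J n))
    (hc0 : Qf J n s ≤ c0) (hct : c0 + t * J n ≤ Qf J n (s + 1)) :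
    Acnt J c0 + t * ((J n + 1) / 2) ≤ Acnt J (c0 + t * J n) := by
  have hJn : 1 ≤ J n := Jpos J hJmono hJ1 (by omega)
  rw [Acnt_split J (Nat.le_add_right _ _)]
  have hsubE : EsetF J n s ⊆ Finset.range (J n) := Eset_subset J n s hJn
  have hlb := count_res_lb (J n) hJn (EsetF J n s) hsubE c0 t
  rw [Eset_card J n s] at hlb
  have hmono : ((Finset.Ioc c0 (c0 + t * J n)).filter (fun m => m % J n ∈ EsetF J n s)).card
      ≤ ((Finset.Ioc c0 (c0 + t * J n)).filter (· ∈ AsetF J)).card := by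
    apply Finset.card_le_card
    intro m hm
    simp only [Finset.mem_filter, Finset.mem_Ioc] at hm ⊢
    refine ⟨hm.1, ?_⟩
    have hm1 : Qf J n s < m := by omega
    have hm2 : m ≤ Qf J n (s + 1) := by omega
    exact (mem_A_seg_iff J hJmono hJ1 hn hs1 hs2 hm1 hm2).2 hm.2
  omega

lemma P2 : ∀ n, 8 ≤ n → ∀ s, 2 ^ (J n - 1) ≤ s → s ≤ 2 ^ (J n) →
    Qf J n s ≤ 32 * Acnt J (Qf J n s) := by
  intro n hn
  induction n, hn using Nat.le_induction with
  | base =>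
    -- n = 8 : prove for all s by induction from the window start
    intro s hs1
    induction s, hs1 using Nat.le_induction with
    | base =>
      intro hs2
      have hbase : Acnt J (Bw J 8) = Bw J 8 := by
        have := Acnt_gap J (show 0 ≤ Bw J 8 by omega)
          (fun m hm1 hm2 => mem_A_low J hJmono hJ1 hm2)
        simpa [Acnt] using this
      show Qf J 8 (2 ^ (J 8 - 1)) ≤ 32 * Acnt J (Qf J 8 (2 ^ (J 8 - 1)))
      rw [show Qf J 8 (2 ^ (J 8 - 1)) = Bw J 8 from rfl, hbase]
      omega
    | succ s hs ih =>
      intro hs2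
      have hslt : s < 2 ^ (J 8) := by omega
      have ihs := ih (by omega)
      have hJn : 1 ≤ J 8 := Jpos J hJmono hJ1 (by omega)
      have hseg := Acnt_seg J hJmono hJ1 (show 8 ≤ 8 by omega) hs hslt (le_refl (Qf J 8 s))
        (t := 8 * (8 + 1) ^ s) (by rw [Qsucc J])
      have hQs : Qf J 8 (s + 1) = Qf J 8 s + (8 * (8+1) ^ s) * J 8 := Qsucc J 8 s
      have hhalf : J 8 ≤ 2 * ((J 8 + 1) / 2) := by omega
      set t := 8 * (8 + 1) ^ s with ht
      set th := t * ((J 8 + 1) / 2) with hth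
      have htJ : t * J 8 ≤ 2 * th := by
        rw [hth]
        calc t * J 8 ≤ t * (2 * ((J 8 + 1) / 2)) := Nat.mul_le_mul_left _ hhalf
        _ = 2 * (t * ((J 8 + 1) / 2)) := by ring
      rw [hQs]
      omega
  | succ n hn8 ihn =>
    intro s hs1
    induction s, hs1 using Nat.le_induction with
    | base =>
      intro hs2
      -- window start for n+1 ≥ 9
      have hL := ihn (2 ^ (J n)) (by
        have hJn : 1 ≤ J n := Jpos J hJmono hJ1 (by omega)
        have : 2 ^ (J n) = 2 ^ (J n - 1) * 2 := by
          obtain ⟨j0, hj0⟩ : ∃ j0, J n = j0 + 1 := ⟨J n - 1, by omega⟩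
          rw [hj0, pow_succ]; simp
        have := pow_pos (show 0 < 2 by omega) (J n - 1)
        omega) (le_refl _)
      have hLB : Lw J n ≤ Bw J (n + 1) := LleB J hJmono hJ1 n (by omega)
      have hgap := Acnt_gap J hLB (fun m hm1 hm2 => mem_A_gap J hJmono hJ1 (by omega) hm1 hm2)
      show Qf J (n+1) (2 ^ (J (n+1) - 1)) ≤ 32 * Acnt J (Qf J (n+1) (2 ^ (J (n+1) - 1)))
      have hBL : Bw J (n+1) = Qf J (n+1) (2 ^ (J (n+1) - 1)) := rfl
      have hLw : Lw J n = Qf J n (2 ^ (J n)) := rfl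
      rw [← hBL, hgap]
      rw [hLw] at hgap ⊢
      omega
    | succ s hs ih =>
      intro hs2
      have hslt : s < 2 ^ (J (n+1)) := by omega
      have ihs := ih (by omega)
      have hseg := Acnt_seg J hJmono hJ1 (show 8 ≤ n+1 by omega) hs hslt (le_refl (Qf J (n+1) s))
        (t := (n+1) * (n + 1 + 1) ^ s) (by rw [Qsucc J])
      have hQs : Qf J (n+1) (s + 1) = Qf J (n+1) s + ((n+1) * (n+1+1) ^ s) * J (n+1) := Qsucc J (n+1) s
      have hhalf : J (n+1) ≤ 2 * ((J (n+1) + 1) / 2) := by omega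
      set t := (n+1) * (n + 1 + 1) ^ s with ht
      set th := t * ((J (n+1) + 1) / 2) with hth
      have htJ : t * J (n+1) ≤ 2 * th := by
        rw [hth]
        calc t * J (n+1) ≤ t * (2 * ((J (n+1) + 1) / 2)) := Nat.mul_le_mul_left _ hhalf
        _ = 2 * (t * ((J (n+1) + 1) / 2)) := by ring
      rw [hQs]
      omega

lemma P1 : ∀ N, N ≤ 96 * Acnt J N := by
  intro N
  rcases le_or_gt N (Bw J 8) with hN | hN
  · -- everything up to B8 is in A
    have : Acnt J N = N := by
      have := Acnt_gap J (show 0 ≤ N by omega)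
        (fun m hm1 hm2 => mem_A_low J hJmono hJ1 (le_trans hm2 hN))
      simpa [Acnt] using this
    omega
  · -- find the window containing N
    set P : ℕ → Prop := fun k => Bw J k < N with hP
    have hB8 : 8 ≤ Bw J 8 := by
      calc 8 ≤ J 8 := Jge J hJmono hJ1 8 (by omega)
      _ ≤ Bw J 8 := JleQ J _
    have h8N : 8 ≤ N := by omega
    set n := Nat.findGreatest P N with hn
    have hn8 : 8 ≤ n := Nat.le_findGreatest (by omega) hN
    have hspec : Bw J n < N := Nat.findGreatest_spec (P := P) (by omega : 8 ≤ N) hN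
    have hnN : n < N := by
      have h1 : n ≤ J n := Jge J hJmono hJ1 n (by omega)
      have h2 : J n ≤ Bw J n := JleQ J _
      omega
    have hnext : N ≤ Bw J (n + 1) := by
      by_contra hcon
      push_neg at hcon
      exact Nat.findGreatest_is_greatest (by omega : n < n + 1) (by omega : n + 1 ≤ N) hcon
    rcases Nat.lt_or_ge (Lw J n) N with hLn | hLn
    · -- N is in the gap after window n
      have hgap := Acnt_gap J (le_of_lt hLn)
        (fun m hm1 hm2 => mem_A_gap J hJmono hJ1 hn8 hm1 (le_trans hm2 hnext))
      have hP2 := P2 J hJmono hJ1 n hn8 (2 ^ (J n)) (by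
        have hJn : 1 ≤ J n := Jpos J hJmono hJ1 (by omega)
        have : 2 ^ (J n) = 2 ^ (J n - 1) * 2 := by
          obtain ⟨j0, hj0⟩ : ∃ j0, J n = j0 + 1 := ⟨J n - 1, by omega⟩
          rw [hj0, pow_succ]; simp
        have := pow_pos (show 0 < 2 by omega) (J n - 1)
        omega) (le_refl _)
      have hLw : Lw J n = Qf J n (2 ^ (J n)) := rfl
      rw [hLw] at hgap
      rw [hLw] at hLn
      omega
    · -- N is inside window n : find the segment
      have hJn : 1 ≤ J n := Jpos J hJmono hJ1 (by omega)
      have hpow : 2 ^ (J n - 1) ≤ 2 ^ (J n) - 1 := by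
        have : 2 ^ (J n) = 2 ^ (J n - 1) * 2 := by
          obtain ⟨j0, hj0⟩ : ∃ j0, J n = j0 + 1 := ⟨J n - 1, by omega⟩
          rw [hj0, pow_succ]; simp
        have := pow_pos (show 0 < 2 by omega) (J n - 1)
        omega
      set Ps : ℕ → Prop := fun s => Qf J n s < N with hPs
      set s' := Nat.findGreatest Ps (2 ^ (J n) - 1) with hs'
      have hsσ : 2 ^ (J n - 1) ≤ s' := Nat.le_findGreatest hpow hspec
      have hsbound : s' ≤ 2 ^ (J n) - 1 := Nat.findGreatest_le _
      have hQs' : Qf J n s' < N := Nat.findGreatest_spec (P := Ps) hpow hspec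
      have hNQ : N ≤ Qf J n (s' + 1) := by
        rcases Nat.lt_or_ge s' (2 ^ (J n) - 1) with h | h
        · by_contra hcon
          push_neg at hcon
          exact Nat.findGreatest_is_greatest (by omega : s' < s' + 1) (by omega) hcon
        · have hs'' : s' = 2 ^ (J n) - 1 := by omega
          have : Qf J n (s' + 1) = Lw J n := by
            rw [hs'']
            have : 2 ^ (J n) - 1 + 1 = 2 ^ (J n) := by
              have := pow_pos (show 0 < 2 by omega) (J n)
              omega
            rw [this]
            rfl
          omega
      set M := Qf J n s' with hM
      have hP2 := P2 J hJmono hJ1 n hn8 s' hsσ (le_trans hsbound (Nat.sub_le _ _))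
      rw [← hM] at hP2
      set t := (N - M) / J n with htdef
      have htJ : t * J n ≤ N - M := by
        rw [htdef]
        exact Nat.div_mul_le_self _ _
      have hslt2 : s' < 2 ^ (J n) := by
        have := pow_pos (show 0 < 2 by omega) (J n)
        omega
      have hseg := Acnt_seg J hJmono hJ1 hn8 hsσ hslt2 (le_refl M)
        (t := t) (by omega)
      have hmono : Acnt J (M + t * J n) ≤ Acnt J N := Acnt_mono J (by omega)
      have hJleM : J n ≤ M := JleQ J _
      rcases Nat.lt_or_ge (N - M) (2 * J n) with hsmall | hbig
      · -- N close to M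
        have h1 : Acnt J M ≤ Acnt J N := Acnt_mono J (by omega)
        omega
      · -- at least two periods fit
        have hmod : (N - M) % J n < J n := Nat.mod_lt _ (by omega)
        have hdm : J n * t + (N - M) % J n = N - M := Nat.div_add_mod (N - M) (J n)
        have hcomm : J n * t = t * J n := Nat.mul_comm _ _
        have h2tJ : N - M ≤ 2 * (t * J n) := by omega
        have hhalf : J n ≤ 2 * ((J n + 1) / 2) := by omega
        have htJth : t * J n ≤ 2 * (t * ((J n + 1) / 2)) := by
          calc t * J n ≤ t * (2 * ((J n + 1) / 2)) := Nat.mul_le_mul_left _ hhalf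
          _ = 2 * (t * ((J n + 1) / 2)) := by ring
        omega

end Windows

lemma smul_lim_elim {X : Type*} [NormedAddCommGroup X] [NormedSpace ℝ X] [CompleteSpace X]
    {v : X} (hv : v ≠ 0) {t : ℕ → ℝ} {w : X}
    (h : Tendsto (fun i => t i • v) atTop (𝓝 w)) :
    ∃ c : ℝ, Tendsto t atTop (𝓝 c) ∧ w = c • v := by
  have hvpos : 0 < ‖v‖ := norm_pos_iff.2 hv
  have hcauchy : CauchySeq (fun i => t i • v) := h.cauchySeq
  have hct : CauchySeq t := by
    rw [Metric.cauchySeq_iff] at hcauchy ⊢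
    intro ε hε
    obtain ⟨N, hN⟩ := hcauchy (ε * ‖v‖) (by positivity)
    refine ⟨N, fun m hm n hn => ?_⟩
    have h1 := hN m hm n hn
    rw [dist_eq_norm, ← sub_smul, norm_smul, Real.norm_eq_abs] at h1
    rw [Real.dist_eq]
    have := lt_of_mul_lt_mul_right h1 hvpos.le
    exact this
  obtain ⟨c, hc⟩ := cauchySeq_tendsto_of_complete hct
  exact ⟨c, hc, tendsto_nhds_unique h (hc.smul_const v)⟩

set_option maxHeartbeats 2000000 in
/-- Let `X` be a Banach space with a Schauder basis `(e_k)` (with coordinate functionals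
`a k` and canonical projections `π K x = Σ_{k<K} (a k x) • e k`), and let `T` be a bounded
operator on `X`. Suppose there are increasing sequences of positive integers `(K_n)`, `(J_n)`
such that for every `n ≥ 1`: (a) `T^{J_n} π_{K_n} = π_{K_n}`, and
(b) `‖π_{K_n} T^j (I − π_{K_n}) x‖ ≤ ‖(I − π_{K_n}) x‖` for all `x` and
`0 ≤ j ≤ (n+1)^{2^{J_n}} J_n`. Then there is a set `A ⊆ ℕ` of positive lower density along
which `T` is not frequently hypercyclic. -/
theorem not_frequentlyHypercyclic_along_some_set
    {X : Type*} [NormedAddCommGroup X] [NormedSpace ℝ X] [CompleteSpace X]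
    (e : ℕ → X) (a : ℕ → X → ℝ)
    (hrepr : ∀ x : X,
      Tendsto (fun K : ℕ => ∑ k ∈ Finset.range K, a k x • e k) atTop (nhds x))
    (huniq : ∀ (x : X) (b : ℕ → ℝ),
      Tendsto (fun K : ℕ => ∑ k ∈ Finset.range K, b k • e k) atTop (nhds x) →
      ∀ k, b k = a k x)
    (π : ℕ → X → X)
    (hπ : ∀ (K : ℕ) (x : X), π K x = ∑ k ∈ Finset.range K, a k x • e k)
    (T : X →L[ℝ] X) (K J : ℕ → ℕ) (hK : StrictMono K) (hJ : StrictMono J)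
    (hKpos : ∀ n, 1 ≤ n → 0 < K n) (hJpos : ∀ n, 1 ≤ n → 0 < J n)
    (ha : ∀ n, 1 ≤ n → ∀ x : X, (T ^ (J n)) (π (K n) x) = π (K n) x)
    (hb : ∀ n, 1 ≤ n → ∀ x : X, ∀ j ≤ (n + 1) ^ (2 ^ (J n)) * J n,
      ‖π (K n) ((T ^ j) (x - π (K n) x))‖ ≤ ‖x - π (K n) x‖) :
    ∃ A : Set ℕ, 0 < lowerDensity A ∧
      ¬ ∃ x : X, ∀ V : Set X, IsOpen V → V.Nonempty →
          0 < lowerDensity ({n : ℕ | (T ^ n) x ∈ V} ∩ A) := by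
  have hJ1 : 1 ≤ J 1 := hJpos 1 (le_refl 1)
  -- ## Step 1 : linearity of the coordinate functionals
  have ha_zero : ∀ k, a k 0 = 0 := by
    intro k
    have h0 : Tendsto (fun K' : ℕ => ∑ k ∈ Finset.range K', (0:ℝ) • e k) atTop (𝓝 (0:X)) := by
      simpa using (tendsto_const_nhds : Tendsto (fun _ : ℕ => (0:X)) atTop _)
    exact (huniq 0 (fun _ => 0) h0 k).symm
  have ha_sub : ∀ k (x y : X), a k (x - y) = a k x - a k y := by
    intro k x y
    refine (huniq (x - y) (fun k => a k x - a k y) ?_ k).symm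
    have h1 := (hrepr x).sub (hrepr y)
    simpa [sub_smul, Finset.sum_sub_distrib] using h1
  have ha_add : ∀ k (x y : X), a k (x + y) = a k x + a k y := by
    intro k x y
    refine (huniq (x + y) (fun k => a k x + a k y) ?_ k).symm
    have h1 := (hrepr x).add (hrepr y)
    simpa [add_smul, Finset.sum_add_distrib] using h1
  have ha_smul : ∀ k (c : ℝ) (x : X), a k (c • x) = c * a k x := by
    intro k c x
    refine (huniq (c • x) (fun k => c * a k x) ?_ k).symm
    have h1 := (hrepr x).const_smul c
    simpa [mul_smul, Finset.smul_sum] using h1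
  have hπ_tendsto : ∀ x : X, Tendsto (fun K' : ℕ => π K' x) atTop (𝓝 x) := by
    intro x
    have : (fun K' : ℕ => π K' x) = fun K' : ℕ => ∑ k ∈ Finset.range K', a k x • e k :=
      funext fun K' => hπ K' x
    rw [this]
    exact hrepr x
  have hπ_sub : ∀ (K' : ℕ) (x y : X), π K' (x - y) = π K' x - π K' y := by
    intro K' x y
    simp [hπ, ha_sub, sub_smul, Finset.sum_sub_distrib]
  have hπ_add : ∀ (K' : ℕ) (x y : X), π K' (x + y) = π K' x + π K' y := by
    intro K' x y
    simp [hπ, ha_add, add_smul, Finset.sum_add_distrib]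
  have hπ_smul : ∀ (K' : ℕ) (c : ℝ) (x : X), π K' (c • x) = c • π K' x := by
    intro K' c x
    simp [hπ, ha_smul, mul_smul, Finset.smul_sum]
  have hπ0 : ∀ x : X, π 0 x = 0 := by
    intro x
    simp [hπ]
  -- coefficients of basis vectors
  have hae : ∀ k j, a k (e j) = if k = j then (1:ℝ) else 0 := by
    intro k j
    refine (huniq (e j) (fun k => if k = j then (1:ℝ) else 0) ?_ k).symm
    have hev : ∀ K' : ℕ, j + 1 ≤ K' →
        (∑ kk ∈ Finset.range K', (if kk = j then (1:ℝ) else 0) • e kk) = e j := by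
      intro K' hK'
      rw [Finset.sum_eq_single j]
      · simp
      · intro b _ hbj
        simp [hbj]
      · intro hj
        exact absurd (Finset.mem_range.2 (by omega)) hj
    refine Tendsto.congr' ?_ (tendsto_const_nhds : Tendsto (fun _ : ℕ => e j) atTop _)
    filter_upwards [eventually_ge_atTop (j + 1)] with K' hK'
    exact (hev K' hK').symm
  have he_ne : ∀ k, e k ≠ 0 := by
    intro k hk
    have hev : ∀ K' : ℕ, k + 1 ≤ K' →
        (∑ kk ∈ Finset.range K', (if kk = k then (1:ℝ) else 0) • e kk) = 0 := by
      intro K' hK'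
      rw [Finset.sum_eq_single k]
      · simp [hk]
      · intro b _ hbj
        simp [hbj]
      · intro hj
        exact absurd (Finset.mem_range.2 (by omega)) hj
    have h0 : Tendsto (fun K' : ℕ => ∑ kk ∈ Finset.range K',
        (if kk = k then (1:ℝ) else 0) • e kk) atTop (𝓝 (0:X)) := by
      refine Tendsto.congr' ?_ (tendsto_const_nhds : Tendsto (fun _ : ℕ => (0:X)) atTop _)
      filter_upwards [eventually_ge_atTop (k + 1)] with K' hK'
      exact (hev K' hK').symm
    have := huniq 0 _ h0 k
    rw [ha_zero k] at this
    simp at this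
  have hπe : ∀ K' : ℕ, 1 ≤ K' → π K' (e 0) = e 0 := by
    intro K' hK'
    rw [hπ, Finset.sum_eq_single 0]
    · simp [hae]
    · intro b _ hb0
      simp [hae, hb0]
    · intro h0
      exact absurd (Finset.mem_range.2 (by omega)) h0
  -- ## Step 2 : the uniform bound on the basis projections (closed graph theorem)
  have hbdd : ∀ x : X, ∃ Cx : ℝ, ∀ K' : ℕ, ‖π K' x‖ ≤ Cx := by
    intro x
    obtain ⟨Cx, hCx⟩ := (hπ_tendsto x).norm.bddAbove_range
    exact ⟨Cx, fun K' => hCx ⟨K', rfl⟩⟩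
  choose Cb hCb using hbdd
  set Sfun : X → BoundedContinuousFunction ℕ X := fun x =>
    BoundedContinuousFunction.ofNormedAddCommGroup (fun K' => π K' x)
      continuous_of_discreteTopology (Cb x) (hCb x) with hSfun_def
  have hSfun : ∀ (x : X) (K' : ℕ), Sfun x K' = π K' x := fun x K' => rfl
  set Slin : X →ₗ[ℝ] BoundedContinuousFunction ℕ X :=
    { toFun := Sfun
      map_add' := by
        intro x y
        apply BoundedContinuousFunction.ext
        intro K'
        simp only [BoundedContinuousFunction.coe_add, Pi.add_apply]
        rw [hSfun, hSfun, hSfun, hπ_add]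
      map_smul' := by
        intro c x
        apply BoundedContinuousFunction.ext
        intro K'
        simp only [BoundedContinuousFunction.coe_smul, Pi.smul_apply, RingHom.id_apply]
        rw [hSfun, hSfun, hπ_smul] } with hSlin_def
  have hSlin : ∀ (x : X) (K' : ℕ), Slin x K' = π K' x := fun x K' => rfl
  have hgraph : ∀ (u : ℕ → X) (x₀ : X) (y : BoundedContinuousFunction ℕ X),
      Tendsto u atTop (𝓝 x₀) → Tendsto (Slin ∘ u) atTop (𝓝 y) → y = Slin x₀ := by
    intro u x₀ y hu hSu
    have hpt : ∀ K' : ℕ, Tendsto (fun i => π K' (u i)) atTop (𝓝 (y K')) := by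
      intro K'
      rw [tendsto_iff_dist_tendsto_zero]
      refine squeeze_zero (fun i => dist_nonneg) (fun i => ?_)
        (tendsto_iff_dist_tendsto_zero.mp hSu)
      have : π K' (u i) = (Slin (u i)) K' := rfl
      rw [this]
      exact BoundedContinuousFunction.dist_coe_le_dist K'
    have hstep : ∀ k : ℕ, ∃ ck : ℝ,
        Tendsto (fun i => a k (u i)) atTop (𝓝 ck) ∧ y (k + 1) - y k = ck • e k := by
      intro k
      have hdiff : ∀ i, π (k + 1) (u i) - π k (u i) = a k (u i) • e k := by
        intro i
        simp [hπ, Finset.sum_range_succ]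
      have htd : Tendsto (fun i => a k (u i) • e k) atTop (𝓝 (y (k + 1) - y k)) := by
        have h1 := (hpt (k + 1)).sub (hpt k)
        refine h1.congr fun i => ?_
        rw [hdiff]
      obtain ⟨ck, h1, h2⟩ := smul_lim_elim (he_ne k) htd
      exact ⟨ck, h1, h2⟩
    choose c hc1 hc2 using hstep
    have hy0 : y 0 = 0 := by
      have h1 : Tendsto (fun i => π 0 (u i)) atTop (𝓝 (y 0)) := hpt 0
      have h2 : (fun i => π 0 (u i)) = fun _ => (0 : X) := funext fun i => hπ0 (u i)
      rw [h2] at h1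
      exact (tendsto_nhds_unique tendsto_const_nhds h1).symm
    have hyK : ∀ K' : ℕ, y K' = ∑ k ∈ Finset.range K', c k • e k := by
      intro K'
      induction K' with
      | zero => simpa using hy0
      | succ k ih =>
        rw [Finset.sum_range_succ, ← ih, ← hc2 k]
        abel
    have hctend : Tendsto (fun K' : ℕ => ∑ k ∈ Finset.range K', c k • e k) atTop (𝓝 x₀) := by
      rw [Metric.tendsto_atTop]
      intro ε hε
      obtain ⟨N1, hN1⟩ := Metric.tendsto_atTop.mp hu (ε / 3) (by linarith)
      obtain ⟨N2, hN2⟩ := Metric.tendsto_atTop.mp hSu (ε / 3) (by linarith)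
      set i := max N1 N2 with hi
      have hi1 : dist (u i) x₀ < ε / 3 := hN1 i (le_max_left _ _)
      have hi2 : dist (Slin (u i)) y < ε / 3 := hN2 i (le_max_right _ _)
      obtain ⟨K₀, hK₀⟩ := Metric.tendsto_atTop.mp (hπ_tendsto (u i)) (ε / 3) (by linarith)
      refine ⟨K₀, fun K' hK' => ?_⟩
      have hy : dist (y K') (π K' (u i)) < ε / 3 := by
        have h1 : dist ((Slin (u i)) K') (y K') ≤ dist (Slin (u i)) y :=
          BoundedContinuousFunction.dist_coe_le_dist K'
        have h2 : π K' (u i) = (Slin (u i)) K' := rfl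
        rw [h2, dist_comm]
        exact lt_of_le_of_lt h1 hi2
      calc dist (∑ k ∈ Finset.range K', c k • e k) x₀ = dist (y K') x₀ := by rw [hyK]
      _ ≤ dist (y K') (π K' (u i)) + dist (π K' (u i)) (u i) + dist (u i) x₀ :=
          dist_triangle4 _ _ _ _
      _ < ε / 3 + ε / 3 + ε / 3 := by
          have := hK₀ K' hK'
          linarith
      _ = ε := by ring
    have hck : ∀ k, c k = a k x₀ := huniq x₀ c hctend
    apply BoundedContinuousFunction.ext
    intro K'
    rw [hyK K']
    have : Slin x₀ K' = π K' x₀ := rfl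
    rw [this, hπ]
    exact Finset.sum_congr rfl fun k _ => by rw [hck]
  have Scont : Continuous Slin := Slin.continuous_of_seq_closed_graph hgraph
  set Scl : X →L[ℝ] BoundedContinuousFunction ℕ X := ⟨Slin, Scont⟩ with hScl_def
  set C : ℝ := ‖Scl‖ + 1 with hCdef
  have hC1 : 1 ≤ C := le_add_of_nonneg_left (norm_nonneg _)
  have hC0 : 0 < C := by linarith
  have hCbound : ∀ (K' : ℕ) (z : X), ‖π K' z‖ ≤ C * ‖z‖ := by
    intro K' z
    calc ‖π K' z‖ = ‖(Scl z) K'‖ := rfl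
    _ ≤ ‖Scl z‖ := BoundedContinuousFunction.norm_coe_le_norm _ _
    _ ≤ ‖Scl‖ * ‖z‖ := Scl.le_opNorm z
    _ ≤ C * ‖z‖ := mul_le_mul_of_nonneg_right (by rw [hCdef]; linarith) (norm_nonneg z)
    -- ## Step 3 : the set A and its density
  refine ⟨AsetF J, ?_, ?_⟩
  · -- positive lower density
    have hld : lowerDensity (AsetF J) =
        atTop.liminf (fun N : ℕ => ((Acnt J N : ℝ)) / N) := rfl
    rw [hld]
    have hb1 : ∀ N : ℕ, ((Acnt J N : ℝ)) / N ≤ 1 := by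
      intro N
      rcases Nat.eq_zero_or_pos N with h | h
      · subst h; simp
      · have h1 : Acnt J N ≤ N := by
          have h2 : Acnt J N ≤ (Finset.Icc 1 N).card := Finset.card_filter_le _ _
          rwa [Nat.card_Icc, Nat.add_sub_cancel] at h2
        rw [div_le_one (by exact_mod_cast h)]
        exact_mod_cast h1
    have hcob : IsCoboundedUnder (· ≥ ·) atTop (fun N : ℕ => ((Acnt J N : ℝ)) / N) :=
      Filter.IsBoundedUnder.isCoboundedUnder_ge (Filter.isBoundedUnder_of ⟨1, hb1⟩)
    have hev : ∀ᶠ N : ℕ in atTop, (1:ℝ)/96 ≤ ((Acnt J N : ℝ)) / N := by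
      filter_upwards [eventually_ge_atTop 1] with N hN
      have hP := P1 J hJ hJ1 N
      have hNpos : (0:ℝ) < N := by exact_mod_cast hN
      rw [div_le_div_iff₀ (by norm_num) hNpos]
      have hPr : (N : ℝ) ≤ 96 * (Acnt J N : ℝ) := by exact_mod_cast hP
      linarith
    have h96 : (0:ℝ) < 1/96 := by norm_num
    calc (0:ℝ) < 1/96 := h96
    _ ≤ _ := le_liminf_of_le hcob hev
  · rintro ⟨x, hx⟩
    have he0 : (0:ℝ) < ‖e 0‖ := norm_pos_iff.2 (he_ne 0)
    set ε : ℝ := ‖e 0‖ / (8 * C) with hεdef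
    have hε : 0 < ε := by rw [hεdef]; positivity
    have hCε : C * ε = ‖e 0‖ / 8 := by
      rw [hεdef]
      field_simp
    set V₀ : Set X := Metric.ball (0:X) ε with hV0
    set V₁ : Set X := Metric.ball (e 0) ε with hV1
    set S0 : Set ℕ := {m : ℕ | (T ^ m) x ∈ V₀} ∩ AsetF J with hS0
    set S1 : Set ℕ := {m : ℕ | (T ^ m) x ∈ V₁} ∩ AsetF J with hS1
    have hd0 := hx V₀ Metric.isOpen_ball ⟨0, Metric.mem_ball_self hε⟩
    have hd1 := hx V₁ Metric.isOpen_ball ⟨e 0, Metric.mem_ball_self hε⟩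
    rw [← hS0] at hd0
    rw [← hS1] at hd1
    set u0 : ℕ → ℝ := fun N =>
      (((@Finset.filter ℕ (· ∈ S0) (fun a => Classical.propDecidable _) (Finset.Icc 1 N))).card : ℝ) / N
      with hu0def
    set u1 : ℕ → ℝ := fun N =>
      (((@Finset.filter ℕ (· ∈ S1) (fun a => Classical.propDecidable _) (Finset.Icc 1 N))).card : ℝ) / N
      with hu1def
    set δ : ℝ := min (lowerDensity S0) (lowerDensity S1) / 2 with hδdef
    have hδpos : 0 < δ := by
      rw [hδdef]
      have := lt_min hd0 hd1
      linarith
    have hbdd0 : IsBoundedUnder (· ≥ ·) atTop u0 :=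
      Filter.isBoundedUnder_of ⟨0, fun N => by
        simp only [hu0def]
        exact div_nonneg (Nat.cast_nonneg _) (Nat.cast_nonneg _)⟩
    have hbdd1 : IsBoundedUnder (· ≥ ·) atTop u1 :=
      Filter.isBoundedUnder_of ⟨0, fun N => by
        simp only [hu1def]
        exact div_nonneg (Nat.cast_nonneg _) (Nat.cast_nonneg _)⟩
    have hld0 : lowerDensity S0 = atTop.liminf u0 := by
      simp only [hu0def]
      unfold lowerDensity
      congr!
    have hld1 : lowerDensity S1 = atTop.liminf u1 := by
      simp only [hu1def]
      unfold lowerDensity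
      congr!
    have hev0 : ∀ᶠ N in atTop, δ < u0 N := by
      apply Filter.eventually_lt_of_lt_liminf ?_ hbdd0
      rw [← hld0]
      have h1 := min_le_left (lowerDensity S0) (lowerDensity S1)
      have := lt_min hd0 hd1
      rw [hδdef]
      linarith
    have hev1 : ∀ᶠ N in atTop, δ < u1 N := by
      apply Filter.eventually_lt_of_lt_liminf ?_ hbdd1
      rw [← hld1]
      have h1 := min_le_right (lowerDensity S0) (lowerDensity S1)
      have := lt_min hd0 hd1
      rw [hδdef]
      linarith
    obtain ⟨Nev, hNev⟩ := eventually_atTop.1 (hev0.and hev1)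
    obtain ⟨n0r, hn0r⟩ := Metric.tendsto_atTop.mp (hπ_tendsto x) (‖e 0‖ / 8) (by positivity)
    obtain ⟨nδ, hnδ⟩ := exists_nat_gt (1 / δ)
    set n : ℕ := 8 + Nev + n0r + nδ with hndef
    have hn8 : 8 ≤ n := by omega
    have hn1 : 1 ≤ n := by omega
    have hJn : 1 ≤ J n := hJpos n hn1
    have hKn : 1 ≤ K n := hKpos n hn1
    have hδn : 1 / ((n:ℝ) + 1) < δ := by
      have h2 : (nδ:ℝ) ≤ (n:ℝ) + 1 := by
        have : (nδ:ℝ) ≤ (n:ℝ) := by exact_mod_cast (by omega : nδ ≤ n)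
        linarith
      have h3 : (0:ℝ) < (n:ℝ) + 1 := by positivity
      rw [div_lt_iff₀ h3]
      rw [div_lt_iff₀ hδpos] at hnδ
      nlinarith
    have hrn : ‖x - π (K n) x‖ ≤ ‖e 0‖ / 8 := by
      have h1 : n0r ≤ K n := le_trans (by omega) hK.le_apply
      have h2 := hn0r (K n) h1
      rw [dist_eq_norm, norm_sub_rev] at h2
      linarith
    have hmodT : ∀ j : ℕ, (T ^ j) (π (K n) x) = (T ^ (j % J n)) (π (K n) x) := by
      have hper : ∀ q : ℕ, (T ^ (J n * q)) (π (K n) x) = π (K n) x := by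
        intro q
        induction q with
        | zero => simp
        | succ q ih =>
          have hq : J n * (q + 1) = J n * q + J n := by ring
          rw [hq, pow_add, ContinuousLinearMap.mul_apply, ha n hn1 x, ih]
      intro j
      conv_lhs => rw [← Nat.mod_add_div j (J n)]
      rw [pow_add, ContinuousLinearMap.mul_apply, hper (j / J n)]
    set L : ℕ := (n + 1) ^ (2 ^ (J n)) * J n with hLdef
    set g : ℕ → X := fun ρ => π (K n) ((T ^ ρ) (π (K n) x)) with hgdef
    have hclose : ∀ j : ℕ, j ≤ L → ‖π (K n) ((T ^ j) x) - g (j % J n)‖ ≤ ‖e 0‖ / 8 := by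
      intro j hj
      have hdecomp : π (K n) ((T ^ j) x) - g (j % J n) = π (K n) ((T ^ j) (x - π (K n) x)) := by
        rw [hgdef]
        simp only
        rw [← hmodT j, ← hπ_sub, map_sub]
      rw [hdecomp]
      exact le_trans (hb n hn1 x j hj) hrn
    set E : Finset ℕ := (Finset.range (J n)).filter (fun ρ => ‖g ρ‖ ≤ ‖e 0‖ / 2) with hEdef
    have hres0 : ∀ j : ℕ, j ≤ L → (T ^ j) x ∈ V₀ → j % J n ∈ E := by
      intro j hjL hjV
      have h1 : ‖(T ^ j) x‖ < ε := by
        rw [hV0] at hjV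
        simpa [Metric.mem_ball, dist_eq_norm] using hjV
      have h2 : ‖π (K n) ((T ^ j) x)‖ ≤ ‖e 0‖ / 8 := by
        calc ‖π (K n) ((T ^ j) x)‖ ≤ C * ‖(T ^ j) x‖ := hCbound _ _
        _ ≤ C * ε := mul_le_mul_of_nonneg_left (le_of_lt h1) (le_of_lt hC0)
        _ = ‖e 0‖ / 8 := hCε
      have h3 := hclose j hjL
      have h5 := norm_sub_norm_le (g (j % J n)) (π (K n) ((T ^ j) x))
      rw [norm_sub_rev] at h5
      have h4 : ‖g (j % J n)‖ ≤ ‖e 0‖ / 2 := by linarith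
      rw [hEdef]
      exact Finset.mem_filter.2 ⟨Finset.mem_range.2 (Nat.mod_lt _ (by omega)), h4⟩
    have hres1 : ∀ j : ℕ, j ≤ L → (T ^ j) x ∈ V₁ → j % J n ∉ E := by
      intro j hjL hjV hmem
      have h1 : ‖(T ^ j) x - e 0‖ < ε := by
        rw [hV1] at hjV
        simpa [Metric.mem_ball, dist_eq_norm] using hjV
      have h2 : ‖π (K n) ((T ^ j) x) - e 0‖ ≤ ‖e 0‖ / 8 := by
        have h3 : π (K n) ((T ^ j) x) - e 0 = π (K n) ((T ^ j) x - e 0) := by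
          rw [hπ_sub, hπe (K n) hKn]
        rw [h3]
        calc ‖π (K n) ((T ^ j) x - e 0)‖ ≤ C * ‖(T ^ j) x - e 0‖ := hCbound _ _
        _ ≤ C * ε := mul_le_mul_of_nonneg_left (le_of_lt h1) (le_of_lt hC0)
        _ = ‖e 0‖ / 8 := hCε
      have h3 := hclose j hjL
      have h4 : ‖g (j % J n)‖ ≤ ‖e 0‖ / 2 := (Finset.mem_filter.1 hmem).2
      have t1 := dist_triangle (e 0) (π (K n) ((T ^ j) x)) (g (j % J n))
      rw [dist_eq_norm, dist_eq_norm, dist_eq_norm,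
        norm_sub_rev (e 0) (π (K n) ((T ^ j) x))] at t1
      have t0 : ‖e 0‖ ≤ ‖e 0 - g (j % J n)‖ + ‖g (j % J n)‖ := by
        have h6 := norm_add_le (e 0 - g (j % J n)) (g (j % J n))
        simpa using h6
      linarith
    -- the shared contradiction derivation
    have hcontra : ∀ s : ℕ, 2 ^ (J n - 1) ≤ s → s < 2 ^ (J n) →
        ∀ S : Set ℕ, (∀ N, Nev ≤ N → δ < (((Finset.Icc 1 N).filter
            (· ∈ S)).card : ℝ) / N) →
        (∀ j, Qf J n s < j → j ≤ Qf J n (s + 1) → j ∉ S) → False := by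
      intro s hs1 hs2 S hVev hVnot
      have hQpos : 0 < Qf J n s := Qpos J hJ hJ1 hn1 s
      have hQN' : Qf J n (s + 1) = (n + 1) * Qf J n s := by
        unfold Qf
        rw [pow_succ]
        ring
      have hsub : (Finset.Icc 1 (Qf J n (s + 1))).filter
          (· ∈ S) ⊆ Finset.Icc 1 (Qf J n s) := by
        intro j hj
        simp only [Finset.mem_filter, Finset.mem_Icc] at hj
        obtain ⟨⟨hj1, hj2⟩, hjS⟩ := hj
        simp only [Finset.mem_Icc]
        refine ⟨hj1, ?_⟩
        by_contra hcon
        push_neg at hcon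
        exact hVnot j hcon hj2 hjS
      have hcard : ((Finset.Icc 1 (Qf J n (s + 1))).filter
          (· ∈ S)).card ≤ Qf J n s := by
        have h2 := Finset.card_le_card hsub
        rwa [Nat.card_Icc, Nat.add_sub_cancel] at h2
      have hNev' : Nev ≤ Qf J n (s + 1) := by
        have h1 : n ≤ J n := Jge J hJ hJ1 n hn1
        have h2 : J n ≤ Qf J n (s + 1) := JleQ J _
        omega
      have hδ' := hVev (Qf J n (s + 1)) hNev'
      have hN'pos : (0:ℝ) < (Qf J n (s + 1) : ℝ) := by
        have h0 : 0 < Qf J n (s + 1) := Qpos J hJ hJ1 hn1 (s + 1)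
        exact_mod_cast h0
      have hup : (((Finset.Icc 1 (Qf J n (s + 1))).filter
          (· ∈ S)).card : ℝ) / (Qf J n (s + 1) : ℝ)
          ≤ (Qf J n s : ℝ) / (Qf J n (s + 1) : ℝ) := by
        exact (div_le_div_iff_of_pos_right hN'pos).2 (by exact_mod_cast hcard)
      have hfrac : (Qf J n s : ℝ) / (Qf J n (s + 1) : ℝ) = 1 / ((n:ℝ) + 1) := by
        have hQc : (Qf J n (s + 1) : ℝ) = ((n:ℝ) + 1) * (Qf J n s : ℝ) := by
          rw [hQN']
          push_cast
          ring
        rw [hQc]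
        have hQr : (0:ℝ) < (Qf J n s : ℝ) := by exact_mod_cast hQpos
        field_simp
      rw [hfrac] at hup
      linarith
    -- final case distinction
    have hLQ : ∀ s : ℕ, s < 2 ^ (J n) → Qf J n (s + 1) ≤ L := by
      intro s hs
      have h1 : Qf J n (s + 1) ≤ Qf J n (2 ^ (J n)) := Qle J (by omega)
      have h2 : Qf J n (2 ^ (J n)) = L := by
        rw [hLdef]
        unfold Qf
        ring
      omega
    rcases le_or_gt ((J n + 1) / 2) E.card with hcase | hcase
    · obtain ⟨E', hE'sub, hE'card⟩ := Finset.exists_subset_card_eq hcase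
      have hE'range : E' ⊆ Finset.range (J n) := hE'sub.trans (Finset.filter_subset _ _)
      obtain ⟨s, hs1, hs2, hsE⟩ := Eset_cover J n hJn E' hE'range hE'card
      apply hcontra s hs1 hs2 S1 (fun N hN => by
        have hh := (hNev N hN).2
        simpa only [hu1def] using hh)
      intro j hj1 hj2 hjS
      rw [hS1] at hjS
      obtain ⟨hjV, hjA⟩ := hjS
      have hjL : j ≤ L := le_trans hj2 (hLQ s hs2)
      have hres := hjA n s hn8 hs1 hs2 hj1 hj2
      rw [hsE] at hres
      exact hres1 j hjL hjV (hE'sub hres)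
    · have hEr : E ⊆ Finset.range (J n) := Finset.filter_subset _ _
      have hFcard : (J n + 1) / 2 ≤ ((Finset.range (J n)) \ E).card := by
        rw [Finset.card_sdiff_of_subset hEr, Finset.card_range]
        have h2 : 2 * ((J n + 1) / 2) ≤ J n + 1 := by omega
        omega
      obtain ⟨E', hE'sub, hE'card⟩ := Finset.exists_subset_card_eq hFcard
      have hE'range : E' ⊆ Finset.range (J n) := hE'sub.trans Finset.sdiff_subset
      obtain ⟨s, hs1, hs2, hsE⟩ := Eset_cover J n hJn E' hE'range hE'card
      apply hcontra s hs1 hs2 S0 (fun N hN => by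
        have hh := (hNev N hN).1
        simpa only [hu0def] using hh)
      intro j hj1 hj2 hjS
      rw [hS0] at hjS
      obtain ⟨hjV, hjA⟩ := hjS
      have hjL : j ≤ L := le_trans hj2 (hLQ s hs2)
      have hres := hjA n s hn8 hs1 hs2 hj1 hj2
      rw [hsE] at hres
      have hin := hres0 j hjL hjV
      have hnot := Finset.mem_sdiff.1 (hE'sub hres)
      exact hnot.2 hin
end

section
/- Let X be a Polish topological vector space, let T be a continuous linear operator on X, and let F be the Furstenberg family of all infinite subsets of ℕ. Then T is hereditarily F-hypercyclic if and only if T is topologically mixing. -/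
open Filter Topology Set
open scoped Classical

lemma infinite_of_forall_exists_ge' {s : Set ℕ} (h : ∀ m : ℕ, ∃ n ∈ s, m ≤ n) :
    s.Infinite := by
  intro hfin
  obtain ⟨b, hb⟩ := hfin.bddAbove
  obtain ⟨n, hn, hbn⟩ := h (b + 1)
  exact absurd (hb hn) (by omega)

/-- For the Furstenberg family `F` of all infinite subsets of `ℕ`, a continuous linear
operator `T` on a Polish topological vector space is hereditarily `F`-hypercyclic if and
only if it is topologically mixing (`N(U,V)` is cofinite for all non-empty open `U, V`). -/
theorem hereditarily_infinite_hypercyclic_iff_mixing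
    {X : Type*} [TopologicalSpace X] [AddCommGroup X] [Module ℝ X]
    [IsTopologicalAddGroup X] [ContinuousSMul ℝ X] [PolishSpace X]
    (T : X →L[ℝ] X) :
    (∀ (I : Type) [Countable I] (V : I → Set X) (A : I → Set ℕ),
      (∀ i, IsOpen (V i)) → (∀ i, (V i).Nonempty) → (∀ i, (A i).Infinite) →
      ∃ x : X, ∀ i, (visitSet T x (V i) ∩ A i).Infinite) ↔
    (∀ U V : Set X, IsOpen U → U.Nonempty → IsOpen V → V.Nonempty →
      ({n : ℕ | ∃ x ∈ U, (T ^ n) x ∈ V}ᶜ).Finite) := by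
  constructor
  · -- hereditarily hypercyclic → mixing
    intro h U V hU hUne hV hVne
    by_contra hcon
    have hA : ({n : ℕ | ∃ x ∈ U, (T ^ n) x ∈ V}ᶜ).Infinite := hcon
    set A : Set ℕ := {n : ℕ | ∃ x ∈ U, (T ^ n) x ∈ V}ᶜ with hAdef
    obtain ⟨x, hx⟩ := h ℕ
      (fun k => match k with | 0 => U | _ + 1 => V)
      (fun k => match k with | 0 => Set.univ | m + 1 => (· + m) '' A)
      (fun k => by cases k <;> assumption)
      (fun k => by cases k <;> assumption)
      (fun k => by
        cases k with
        | zero => exact Set.infinite_univ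
        | succ m => exact hA.image (Set.injOn_of_injective (add_left_injective m)))
    obtain ⟨m, hm⟩ := (hx 0).nonempty
    obtain ⟨n, hn⟩ := (hx (m + 1)).nonempty
    obtain ⟨a, haA, rfl⟩ := hn.2
    refine haA ⟨(T ^ m) x, hm.1, ?_⟩
    rw [← ContinuousLinearMap.mul_apply, ← pow_add]
    exact hn.1
  · -- mixing → hereditarily hypercyclic
    intro h I _ V A hVo hVne hAinf
    letI := TopologicalSpace.upgradeIsCompletelyMetrizable X
    set G : I → ℕ → Set X := fun i m => ⋃ n ∈ A i ∩ Set.Ici m, (T ^ n) ⁻¹' (V i)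
      with hGdef
    have hGo : ∀ i m, IsOpen (G i m) := fun i m =>
      isOpen_biUnion fun n _ => (hVo i).preimage (T ^ n).continuous
    have hGd : ∀ i m, Dense (G i m) := by
      intro i m
      rw [dense_iff_inter_open]
      intro W hW hWne
      have hfin := h W (V i) hW hWne (hVo i) (hVne i)
      have h2 : ((A i) \ ({n : ℕ | ∃ x ∈ W, (T ^ n) x ∈ V i}ᶜ ∪ Set.Iio m)).Nonempty :=
        ((hAinf i).diff (hfin.union (Set.finite_Iio m))).nonempty
      obtain ⟨n, hnA, hn2⟩ := h2
      rw [Set.mem_union, not_or, Set.notMem_compl_iff] at hn2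
      obtain ⟨y, hyW, hyV⟩ := hn2.1
      refine ⟨y, hyW, ?_⟩
      exact Set.mem_biUnion ⟨hnA, by simpa using hn2.2⟩ hyV
    have hdense : Dense (⋂ p : I × ℕ, G p.1 p.2) :=
      dense_iInter_of_isOpen (fun p => hGo p.1 p.2) (fun p => hGd p.1 p.2)
    obtain ⟨x, hx⟩ := hdense.nonempty
    refine ⟨x, fun i => infinite_of_forall_exists_ge' fun m => ?_⟩
    have hxm := Set.mem_iInter.mp hx (i, m)
    simp only [hGdef, Set.mem_iUnion, Set.mem_preimage, exists_prop] at hxm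
    obtain ⟨n, ⟨hnA, hnm⟩, hnV⟩ := hxm
    exact ⟨n, ⟨hnV, hnA⟩, hnm⟩
end
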